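/- arXiv:1707.08656 — 11 statements merged into one kernel-verified Lean document; each statement's English description precedes it below -/
import Mathlib

section
/- Let G be a finite connected simple graph of order n ≥ 3 with s support vertices and ℓ pendant vertices, and let δ*(G) denote the minimum of deg(v) taken over all vertices v of G that are not pendant vertices. Then L₂(G) ≤ 2(n − ℓ + s·δ*(G))/(1 + δ*(G)). -/
open Finset

/-- A set `B` is a `k`-limited packing in `G` if every closed neighbourhood
contains at most `k` vertices of `B`. -/
def SimpleGraph.IsLimitedPacking {V : Type*} [Fintype V] [DecidableEq V]
    (G : SimpleGraph V) [DecidableRel G.Adj] (k : ℕ) (B : Finset V) : Prop :=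
  ∀ v : V, ((insert v (G.neighborFinset v)) ∩ B).card ≤ k

/-- The `k`-limited packing number of `G`. -/
noncomputable def SimpleGraph.limitedPackingNumber {V : Type*} [Fintype V] [DecidableEq V]
    (G : SimpleGraph V) [DecidableRel G.Adj] (k : ℕ) : ℕ :=
  sSup {n : ℕ | ∃ B : Finset V, G.IsLimitedPacking k B ∧ B.card = n}

/-- Upper bound on the 2-limited packing number of a connected graph of order `n ≥ 3`
in terms of the number of pendant vertices `ℓ`, the number of support vertices `s`,
and the minimum degree `δ*` over non-pendant vertices. -/
theorem two_limited_packing_upper_bound {V : Type*} [Fintype V] [DecidableEq V]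
    (G : SimpleGraph V) [DecidableRel G.Adj]
    (hconn : G.Connected) (hn : 3 ≤ Fintype.card V)
    (s ℓ δstar : ℕ)
    (hs : s = (Finset.univ.filter (fun v : V => ∃ u, G.Adj v u ∧ G.degree u = 1)).card)
    (hℓ : ℓ = (Finset.univ.filter (fun v : V => G.degree v = 1)).card)
    (hδ : δstar = sInf {d : ℕ | ∃ v : V, G.degree v ≠ 1 ∧ G.degree v = d}) :
    (G.limitedPackingNumber 2 : ℝ) ≤
      2 * ((Fintype.card V : ℝ) - ℓ + s * δstar) / (1 + δstar) := by
  classical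
  -- no support vertex is pendant (no K₂ component)
  have key : ∀ b u : V, G.degree b = 1 → G.Adj b u → G.degree u ≠ 1 := by
    intro b u hb hbu hu
    have hnb : G.neighborFinset b = {u} := by
      apply Finset.eq_singleton_iff_unique_mem.mpr
      refine ⟨(SimpleGraph.mem_neighborFinset _ _ _).mpr hbu, fun x hx => ?_⟩
      by_contra hne
      have : 2 ≤ (G.neighborFinset b).card :=
        Finset.one_lt_card.mpr ⟨x, hx, u, (SimpleGraph.mem_neighborFinset _ _ _).mpr hbu, hne⟩
      rw [SimpleGraph.card_neighborFinset_eq_degree, hb] at this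
      omega
    have hnu : G.neighborFinset u = {b} := by
      apply Finset.eq_singleton_iff_unique_mem.mpr
      refine ⟨(SimpleGraph.mem_neighborFinset _ _ _).mpr hbu.symm, fun x hx => ?_⟩
      by_contra hne
      have : 2 ≤ (G.neighborFinset u).card :=
        Finset.one_lt_card.mpr ⟨x, hx, b, (SimpleGraph.mem_neighborFinset _ _ _).mpr hbu.symm, hne⟩
      rw [SimpleGraph.card_neighborFinset_eq_degree, hu] at this
      omega
    -- every walk from b stays in {b, u}
    have hwalk : ∀ (x w : V), G.Walk x w → (x = b ∨ x = u) → (w = b ∨ w = u) := by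
      intro x w p
      induction p with
      | nil => exact id
      | @cons a c d h p ih =>
        intro hac
        apply ih
        rcases hac with rfl | rfl
        · right
          have : c ∈ G.neighborFinset a := (SimpleGraph.mem_neighborFinset _ _ _).mpr h
          rw [hnb] at this
          simpa using this
        · left
          have : c ∈ G.neighborFinset a := (SimpleGraph.mem_neighborFinset _ _ _).mpr h
          rw [hnu] at this
          simpa using this
    have hsub : (Finset.univ : Finset V) ⊆ {b, u} := by
      intro w _
      have hr := (hconn b w).some
      have := hwalk b w hr (Or.inl rfl)
      simpa using this
    have : Fintype.card V ≤ 2 := by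
      calc Fintype.card V = (Finset.univ : Finset V).card := (Finset.card_univ).symm
        _ ≤ ({b, u} : Finset V).card := Finset.card_le_card hsub
        _ ≤ 2 := Finset.card_insert_le _ _ |>.trans (by simp)
    omega
  -- obtain an optimal packing B
  have hne : {n : ℕ | ∃ B : Finset V, G.IsLimitedPacking 2 B ∧ B.card = n}.Nonempty :=
    ⟨0, ∅, fun v => by simp, rfl⟩
  have hbdd : BddAbove {n : ℕ | ∃ B : Finset V, G.IsLimitedPacking 2 B ∧ B.card = n} := by
    refine ⟨Fintype.card V, fun x hx => ?_⟩
    obtain ⟨B, -, rfl⟩ := hx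
    exact B.card_le_univ.trans_eq Finset.card_univ
  obtain ⟨B, hB, hBcard⟩ := Nat.sSup_mem hne hbdd
  -- notation
  set P : Finset V := Finset.univ.filter (fun v : V => G.degree v = 1) with hP
  set Sf : Finset V := Finset.univ.filter (fun v : V => ∃ u, G.Adj v u ∧ G.degree u = 1) with hSf
  set W : Finset V := Finset.univ.filter (fun v : V => ¬ G.degree v = 1) with hW
  -- double counting
  have hmem : ∀ v b : V, (b ∈ insert v (G.neighborFinset v)) ↔ (v ∈ insert b (G.neighborFinset b)) := by
    intro v b
    simp only [Finset.mem_insert, SimpleGraph.mem_neighborFinset]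
    exact or_congr eq_comm (G.adj_comm v b)
  have hswap : ∑ v ∈ W, ((insert v (G.neighborFinset v)) ∩ B).card
      = ∑ b ∈ B, ((insert b (G.neighborFinset b)) ∩ W).card := by
    have h1 : ∀ (X Y : Finset V), (X ∩ Y).card = ∑ y ∈ Y, if y ∈ X then 1 else 0 := by
      intro X Y
      rw [Finset.inter_comm, ← Finset.filter_mem_eq_inter, Finset.card_filter]
    simp only [h1]
    rw [Finset.sum_comm]
    apply Finset.sum_congr rfl
    intro b _
    apply Finset.sum_congr rfl
    intro v _
    simp [hmem v b]
  -- upper bound from packing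
  have hup : ∑ v ∈ W, ((insert v (G.neighborFinset v)) ∩ B).card ≤ 2 * W.card := by
    calc ∑ v ∈ W, ((insert v (G.neighborFinset v)) ∩ B).card ≤ ∑ _v ∈ W, 2 :=
          Finset.sum_le_sum fun v _ => hB v
      _ = 2 * W.card := by simp [mul_comm]
  -- split B
  set T : Finset V := B.filter (fun b => b ∈ P ∪ Sf) with hT
  set R : Finset V := B.filter (fun b => ¬ b ∈ P ∪ Sf) with hR
  have hsplit : T.card + R.card = B.card := Finset.card_filter_add_card_filter_not _
  -- lower bounds on each term
  have hlow1 : ∀ b ∈ T, 1 ≤ ((insert b (G.neighborFinset b)) ∩ W).card := by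
    intro b hb
    rw [hT, Finset.mem_filter] at hb
    obtain ⟨hbB, hbPS⟩ := hb
    rw [Finset.mem_union] at hbPS
    rcases hbPS with hbP | hbS
    · -- pendant: its neighbor is in W
      rw [hP, Finset.mem_filter] at hbP
      have hdeg := hbP.2
      have : (G.neighborFinset b).Nonempty := by
        rw [← Finset.card_pos, SimpleGraph.card_neighborFinset_eq_degree, hdeg]; omega
      obtain ⟨u, hu⟩ := this
      have hadj : G.Adj b u := (SimpleGraph.mem_neighborFinset _ _ _).mp hu
      apply Finset.card_pos.mpr
      exact ⟨u, Finset.mem_inter.mpr ⟨Finset.mem_insert_of_mem hu,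
        by rw [hW]; simp [key b u hdeg hadj]⟩⟩
    · -- support: itself is in W
      rw [hSf, Finset.mem_filter] at hbS
      obtain ⟨-, u, hadj, hdu⟩ := hbS
      have hbdeg : G.degree b ≠ 1 := fun h => key u b hdu hadj.symm h
      apply Finset.card_pos.mpr
      exact ⟨b, Finset.mem_inter.mpr ⟨Finset.mem_insert_self _ _, by rw [hW]; simp [hbdeg]⟩⟩
  have hlow2 : ∀ b ∈ R, 1 + δstar ≤ ((insert b (G.neighborFinset b)) ∩ W).card := by
    intro b hb
    rw [hR, Finset.mem_filter] at hb
    obtain ⟨hbB, hbPS⟩ := hb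
    rw [Finset.mem_union, not_or] at hbPS
    obtain ⟨hbP, hbS⟩ := hbPS
    rw [hP, Finset.mem_filter] at hbP
    rw [hSf, Finset.mem_filter] at hbS
    have hbdeg : G.degree b ≠ 1 := fun h => hbP ⟨Finset.mem_univ _, h⟩
    have hSsub : insert b (G.neighborFinset b) ⊆ W := by
      intro v hv
      rw [Finset.mem_insert] at hv
      rw [hW, Finset.mem_filter]
      refine ⟨Finset.mem_univ _, ?_⟩
      rcases hv with rfl | hv
      · exact hbdeg
      · intro hdv
        exact hbS ⟨Finset.mem_univ _, v, (SimpleGraph.mem_neighborFinset _ _ _).mp hv, hdv⟩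
    rw [Finset.inter_eq_left.mpr hSsub, Finset.card_insert_of_notMem (by simp),
      SimpleGraph.card_neighborFinset_eq_degree]
    have : δstar ≤ G.degree b := hδ ▸ Nat.sInf_le ⟨b, hbdeg, rfl⟩
    omega
  -- combine: T.card + R.card * (1 + δstar) ≤ 2 * W.card
  have hmain : T.card + R.card * (1 + δstar) ≤ 2 * W.card := by
    have : ∑ b ∈ B, ((insert b (G.neighborFinset b)) ∩ W).card
        = ∑ b ∈ T, ((insert b (G.neighborFinset b)) ∩ W).card
          + ∑ b ∈ R, ((insert b (G.neighborFinset b)) ∩ W).card :=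
      (Finset.sum_filter_add_sum_filter_not B _ _).symm
    have h1 : T.card ≤ ∑ b ∈ T, ((insert b (G.neighborFinset b)) ∩ W).card := by
      calc T.card = ∑ _b ∈ T, 1 := by simp
        _ ≤ _ := Finset.sum_le_sum hlow1
    have h2 : R.card * (1 + δstar) ≤ ∑ b ∈ R, ((insert b (G.neighborFinset b)) ∩ W).card := by
      calc R.card * (1 + δstar) = ∑ _b ∈ R, (1 + δstar) := by simp [mul_comm]
        _ ≤ _ := Finset.sum_le_sum hlow2
    omega
  -- fiber counting: T.card ≤ 2 * s
  have hTs : T.card ≤ 2 * s := by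
    set g : V → V := fun b => if h : ∃ u, G.Adj b u ∧ G.degree b = 1 then h.choose else b with hg
    have hgmem : ∀ b ∈ T, g b ∈ Sf := by
      intro b hb
      rw [hT, Finset.mem_filter, Finset.mem_union] at hb
      obtain ⟨hbB, hbPS⟩ := hb
      rw [hg]
      by_cases h : ∃ u, G.Adj b u ∧ G.degree b = 1
      · simp only [dif_pos h]
        obtain ⟨hadj, hdeg⟩ := h.choose_spec
        rw [hSf, Finset.mem_filter]
        exact ⟨Finset.mem_univ _, b, hadj.symm, hdeg⟩
      · simp only [dif_neg h]
        rcases hbPS with hbP | hbS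
        · exfalso
          rw [hP, Finset.mem_filter] at hbP
          have hdeg := hbP.2
          have hne : (G.neighborFinset b).Nonempty := by
            rw [← Finset.card_pos, SimpleGraph.card_neighborFinset_eq_degree, hdeg]; omega
          obtain ⟨u, hu⟩ := hne
          exact h ⟨u, (SimpleGraph.mem_neighborFinset _ _ _).mp hu, hdeg⟩
        · exact hbS
    have hfiber : ∀ u ∈ Sf, (T.filter (fun b => g b = u)).card ≤ 2 := by
      intro u _
      have hsub : T.filter (fun b => g b = u) ⊆ (insert u (G.neighborFinset u)) ∩ B := by
        intro b hb
        rw [Finset.mem_filter] at hb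
        obtain ⟨hbT, hgb⟩ := hb
        rw [hT, Finset.mem_filter] at hbT
        apply Finset.mem_inter.mpr
        refine ⟨?_, hbT.1⟩
        rw [hg] at hgb
        by_cases h : ∃ u', G.Adj b u' ∧ G.degree b = 1
        · simp only [dif_pos h] at hgb
          obtain ⟨hadj, -⟩ := h.choose_spec
          rw [hgb] at hadj
          exact Finset.mem_insert_of_mem ((SimpleGraph.mem_neighborFinset _ _ _).mpr hadj.symm)
        · simp only [dif_neg h] at hgb
          rw [← hgb]
          exact Finset.mem_insert_self _ _
      exact (Finset.card_le_card hsub).trans (hB u)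
    calc T.card = ∑ u ∈ Sf, (T.filter (fun b => g b = u)).card :=
          Finset.card_eq_sum_card_fiberwise hgmem
      _ ≤ ∑ _u ∈ Sf, 2 := Finset.sum_le_sum hfiber
      _ = 2 * s := by rw [hs]; simp [mul_comm]
  -- the natural-number inequality
  have hnat : (1 + δstar) * B.card ≤ 2 * W.card + 2 * s * δstar := by
    calc (1 + δstar) * B.card = (1 + δstar) * (T.card + R.card) := by rw [hsplit]
      _ = (T.card + R.card * (1 + δstar)) + δstar * T.card := by ring
      _ ≤ 2 * W.card + δstar * (2 * s) :=
          Nat.add_le_add hmain (Nat.mul_le_mul_left _ hTs)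
      _ = 2 * W.card + 2 * s * δstar := by ring
  -- cardinalities: ℓ + W.card = n
  have hcards : ℓ + W.card = Fintype.card V := by
    rw [hℓ, hW, Finset.card_filter_add_card_filter_not, Finset.card_univ]
  -- pass to the reals
  have hpos : (0 : ℝ) < 1 + δstar := by positivity
  rw [le_div_iff₀ hpos]
  have hL : G.limitedPackingNumber 2 = B.card := hBcard.symm
  rw [hL]
  have hcr : (Fintype.card V : ℝ) = (ℓ : ℝ) + W.card := by exact_mod_cast hcards.symm
  have hRr : ((1 + δstar : ℕ) : ℝ) * B.card ≤ 2 * W.card + 2 * s * δstar := by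
    exact_mod_cast hnat
  push_cast at hRr ⊢
  nlinarith [hRr, hcr]
end

section
/- Let G be a finite simple graph of order n and size m, and let k be an integer with 1 ≤ k ≤ Δ(G). If k ≤ 2(n − √(n² − n − 2m)) or δ(G) ≥ k − 1, then L_k(G) ≤ n + k/2 − √(k²/4 + (1 − k)n + 2m). -/
open Finset

/-- Upper bound on the `k`-limited packing number in terms of order `n` and size `m`. -/
theorem limited_packing_upper_bound {V : Type*} [Fintype V] [DecidableEq V]
    (G : SimpleGraph V) [DecidableRel G.Adj] (k n m : ℕ)
    (hk1 : 1 ≤ k) (hk2 : k ≤ G.maxDegree)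
    (hn : n = Fintype.card V) (hm : m = G.edgeFinset.card)
    (hcond : (k : ℝ) ≤ 2 * ((n : ℝ) - Real.sqrt ((n : ℝ) ^ 2 - n - 2 * m)) ∨
      k - 1 ≤ G.minDegree) :
    (G.limitedPackingNumber k : ℝ) ≤
      n + k / 2 - Real.sqrt ((k : ℝ) ^ 2 / 4 + (1 - (k : ℝ)) * n + 2 * m) := by
  classical
  -- the sSup is attained by some packing B
  set S : Set ℕ := {n : ℕ | ∃ B : Finset V, G.IsLimitedPacking k B ∧ B.card = n} with hS
  have hne : S.Nonempty := ⟨0, ∅, fun v => by simp, by simp⟩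
  have hbdd : BddAbove S := by
    refine ⟨Fintype.card V, fun x hx => ?_⟩
    obtain ⟨B, _, rfl⟩ := hx
    exact B.card_le_univ
  obtain ⟨B, hB, hBL⟩ := Nat.sSup_mem hne hbdd
  have hLdef : G.limitedPackingNumber k = B.card := by
    rw [SimpleGraph.limitedPackingNumber, ← hS, hBL]
  set C : Finset V := univ \ B with hC
  -- basic cardinalities
  have hcards : B.card + C.card = n := by
    have h := Finset.card_sdiff_add_card_eq_card (Finset.subset_univ B)
    have h2 : (univ : Finset V).card = Fintype.card V := Finset.card_univ
    rw [hn, hC]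
    omega
  -- per vertex bounds
  have h1 : ∀ v ∈ B, (G.neighborFinset v ∩ B).card + 1 ≤ k := by
    intro v hv
    have := hB v
    rwa [Finset.insert_inter_of_mem hv,
      Finset.card_insert_of_notMem (by simp)] at this
  have h2 : ∀ v : V, (G.neighborFinset v ∩ B).card ≤ k := by
    intro v
    exact le_trans (Finset.card_le_card (Finset.inter_subset_inter_right
      (Finset.subset_insert v _))) (hB v)
  have h3 : ∀ v ∈ C, (G.neighborFinset v ∩ C).card + 1 ≤ C.card := by
    intro v hv
    have hsub : G.neighborFinset v ∩ C ⊆ C.erase v := by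
      intro w hw
      simp only [Finset.mem_inter, SimpleGraph.mem_neighborFinset] at hw
      exact Finset.mem_erase.2 ⟨fun h => G.irrefl (h ▸ hw.1), hw.2⟩
    have := Finset.card_le_card hsub
    rw [Finset.card_erase_of_mem hv] at this
    have hc1 : 1 ≤ C.card := Finset.card_pos.2 ⟨v, hv⟩
    omega
  -- double counting edges between B and C
  have hswap : ∑ v ∈ B, (G.neighborFinset v ∩ C).card
      = ∑ v ∈ C, (G.neighborFinset v ∩ B).card := by
    have hrep : ∀ (v : V) (T : Finset V), (G.neighborFinset v ∩ T).card
        = ∑ w ∈ T, if G.Adj v w then 1 else 0 := by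
      intro v T
      rw [Finset.inter_comm, ← Finset.filter_mem_eq_inter, Finset.card_filter]
      simp [SimpleGraph.mem_neighborFinset]
    simp only [hrep]
    rw [Finset.sum_comm]
    congr 1; ext w; congr 1; ext v
    simp [G.adj_comm]
  -- degree decomposition
  have hdeg : ∀ v : V, G.degree v
      = (G.neighborFinset v ∩ B).card + (G.neighborFinset v ∩ C).card := by
    intro v
    have hnc : G.neighborFinset v ∩ C = G.neighborFinset v \ B := by
      rw [hC]; ext w; simp
    rw [hnc, SimpleGraph.degree]
    exact (Finset.card_inter_add_card_sdiff _ _).symm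
  -- the key counting inequality over ℕ
  have hmain : 2 * m + n ≤ B.card * k + 2 * (C.card * k) + C.card * C.card := by
    have hsum : ∑ v : V, G.degree v = 2 * m := by
      rw [hm]; exact G.sum_degrees_eq_twice_card_edges
    have hsplit : ∑ v ∈ C, G.degree v + ∑ v ∈ B, G.degree v = 2 * m := by
      rw [← hsum]; exact Finset.sum_sdiff (Finset.subset_univ B)
    have hBsum : ∑ v ∈ B, G.degree v + B.card
        ≤ B.card * k + ∑ v ∈ C, (G.neighborFinset v ∩ B).card := by
      have : ∑ v ∈ B, (G.degree v + 1)
          ≤ B.card * k + ∑ v ∈ B, (G.neighborFinset v ∩ C).card := by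
        calc ∑ v ∈ B, (G.degree v + 1)
            = ∑ v ∈ B, (((G.neighborFinset v ∩ B).card + 1)
              + (G.neighborFinset v ∩ C).card) := by
              apply Finset.sum_congr rfl; intro v _; rw [hdeg v]; ring
          _ ≤ ∑ v ∈ B, (k + (G.neighborFinset v ∩ C).card) := by
              apply Finset.sum_le_sum; intro v hv
              exact Nat.add_le_add_right (h1 v hv) _
          _ = B.card * k + ∑ v ∈ B, (G.neighborFinset v ∩ C).card := by
              rw [Finset.sum_add_distrib, Finset.sum_const, smul_eq_mul]
      rw [Finset.sum_add_distrib, Finset.sum_const, smul_eq_mul, mul_one] at this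
      rwa [hswap] at this
    have hCsum : ∑ v ∈ C, G.degree v + C.card
        ≤ ∑ v ∈ C, (G.neighborFinset v ∩ B).card + C.card * C.card := by
      calc ∑ v ∈ C, G.degree v + C.card
          = ∑ v ∈ C, (G.degree v + 1) := by
            rw [Finset.sum_add_distrib, Finset.sum_const, smul_eq_mul, mul_one]
        _ = ∑ v ∈ C, ((G.neighborFinset v ∩ B).card
            + ((G.neighborFinset v ∩ C).card + 1)) := by
            apply Finset.sum_congr rfl; intro v _; rw [hdeg v]; ring
        _ ≤ ∑ v ∈ C, ((G.neighborFinset v ∩ B).card + C.card) := by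
            apply Finset.sum_le_sum; intro v hv
            exact Nat.add_le_add_left (h3 v hv) _
        _ = ∑ v ∈ C, (G.neighborFinset v ∩ B).card + C.card * C.card := by
            rw [Finset.sum_add_distrib, Finset.sum_const, smul_eq_mul]
    have hCB : ∑ v ∈ C, (G.neighborFinset v ∩ B).card ≤ C.card * k := by
      calc ∑ v ∈ C, (G.neighborFinset v ∩ B).card ≤ ∑ v ∈ C, k :=
            Finset.sum_le_sum (fun v _ => h2 v)
        _ = C.card * k := by rw [Finset.sum_const, smul_eq_mul]
    omega
  -- pass to ℝ
  rw [hLdef]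
  have hLn : (B.card : ℝ) ≤ n := by
    have : B.card ≤ n := by omega
    exact_mod_cast this
  have hck : (0:ℝ) ≤ (C.card : ℝ) + k / 2 := by positivity
  have hmainR : 2 * (m:ℝ) + n ≤ B.card * k + 2 * (C.card * k) + C.card * C.card := by
    exact_mod_cast hmain
  have hcardsR : (B.card : ℝ) + C.card = n := by exact_mod_cast hcards
  have hsq : (k : ℝ) ^ 2 / 4 + (1 - (k : ℝ)) * n + 2 * m ≤ ((C.card : ℝ) + k / 2) ^ 2 := by
    nlinarith [hmainR, hcardsR]
  have hsqrt : Real.sqrt ((k : ℝ) ^ 2 / 4 + (1 - (k : ℝ)) * n + 2 * m)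
      ≤ (C.card : ℝ) + k / 2 := by
    calc Real.sqrt ((k : ℝ) ^ 2 / 4 + (1 - (k : ℝ)) * n + 2 * m)
        ≤ Real.sqrt (((C.card : ℝ) + k / 2) ^ 2) := Real.sqrt_le_sqrt hsq
      _ = (C.card : ℝ) + k / 2 := Real.sqrt_sq hck
  have : (C.card : ℝ) = n - B.card := by linarith
  linarith [hsqrt]
end

section
/- Let G be a finite simple graph of order n and size m, and let k be an integer with 1 ≤ k ≤ Δ(G) such that k ≤ 2(n − √(n² − n − 2m)) or δ(G) ≥ k − 1. Then L_k(G) = n + k/2 − √(k²/4 + (1 − k)n + 2m) if and only if there exists a clique S ⊆ V(G) such that the subgraph of G induced on V(G) ∖ S is (k − 1)-regular and every vertex of S has exactly k neighbours in V(G) ∖ S. -/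
open Finset

private lemma sum_all_eq {α : Type*} {s : Finset α} {f : α → ℕ} {c : ℕ}
    (h : ∀ v ∈ s, f v ≤ c) (he : s.card * c ≤ ∑ v ∈ s, f v) : ∀ v ∈ s, f v = c := by
  intro v hv
  by_contra hne
  have hlt : ∑ v ∈ s, f v < ∑ _v ∈ s, c :=
    Finset.sum_lt_sum h ⟨v, hv, lt_of_le_of_ne (h v hv) hne⟩
  rw [Finset.sum_const, smul_eq_mul] at hlt
  omega

private lemma nbr_double_count {V : Type*} [Fintype V] [DecidableEq V]
    (G : SimpleGraph V) [DecidableRel G.Adj] (A B : Finset V) :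
    ∑ v ∈ A, (G.neighborFinset v ∩ B).card = ∑ v ∈ B, (G.neighborFinset v ∩ A).card := by
  have key : ∀ A B : Finset V, ∑ v ∈ A, (G.neighborFinset v ∩ B).card
      = ∑ v ∈ A, ∑ w ∈ B, if G.Adj v w then 1 else 0 := by
    intro A B
    refine Finset.sum_congr rfl fun v _ => ?_
    have h : G.neighborFinset v ∩ B = B.filter (fun w => G.Adj v w) := by
      ext w; simp [and_comm]
    rw [h, Finset.card_filter]
  rw [key, key, Finset.sum_comm]
  exact Finset.sum_congr rfl fun v _ => Finset.sum_congr rfl fun w _ => by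
    simp only [G.adj_comm]

private lemma edge_split {V : Type*} [Fintype V] [DecidableEq V]
    (G : SimpleGraph V) [DecidableRel G.Adj] (B : Finset V) :
    2 * G.edgeFinset.card = (∑ v ∈ B, (G.neighborFinset v ∩ B).card)
      + 2 * (∑ v ∈ Bᶜ, (G.neighborFinset v ∩ B).card)
      + ∑ v ∈ Bᶜ, (G.neighborFinset v ∩ Bᶜ).card := by
  have hdeg : ∀ v : V, G.degree v
      = (G.neighborFinset v ∩ B).card + (G.neighborFinset v ∩ Bᶜ).card := by
    intro v
    have h1 : (G.neighborFinset v ∩ B).card + (G.neighborFinset v \ B).card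
        = (G.neighborFinset v).card := Finset.card_inter_add_card_sdiff _ _
    have h2 : G.neighborFinset v \ B = G.neighborFinset v ∩ Bᶜ := by
      ext w; simp
    rw [← SimpleGraph.card_neighborFinset_eq_degree, ← h1, h2]
  have h1 : (∑ v ∈ B, (fun v => G.degree v) v) + ∑ v ∈ Bᶜ, (fun v => G.degree v) v
      = 2 * G.edgeFinset.card := by
    rw [Finset.sum_add_sum_compl B (fun v => G.degree v)]
    exact G.sum_degrees_eq_twice_card_edges
  simp only at h1
  have e1 : ∑ v ∈ B, G.degree v
      = (∑ v ∈ B, (G.neighborFinset v ∩ B).card) + ∑ v ∈ B, (G.neighborFinset v ∩ Bᶜ).card := by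
    rw [← Finset.sum_add_distrib]; exact Finset.sum_congr rfl fun v _ => hdeg v
  have e2 : ∑ v ∈ Bᶜ, G.degree v
      = (∑ v ∈ Bᶜ, (G.neighborFinset v ∩ B).card) + ∑ v ∈ Bᶜ, (G.neighborFinset v ∩ Bᶜ).card := by
    rw [← Finset.sum_add_distrib]; exact Finset.sum_congr rfl fun v _ => hdeg v
  have e3 : ∑ v ∈ B, (G.neighborFinset v ∩ Bᶜ).card
      = ∑ v ∈ Bᶜ, (G.neighborFinset v ∩ B).card := nbr_double_count G B Bᶜ
  omega

private lemma packing_count {V : Type*} [Fintype V] [DecidableEq V]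
    (G : SimpleGraph V) [DecidableRel G.Adj] {k : ℕ} (B : Finset V)
    (hB : G.IsLimitedPacking k B) :
    (∑ v ∈ B, ((G.neighborFinset v ∩ B).card + 1)) ≤ B.card * k ∧
    (∑ v ∈ Bᶜ, (G.neighborFinset v ∩ B).card) ≤ Bᶜ.card * k ∧
    (∑ v ∈ Bᶜ, ((G.neighborFinset v ∩ Bᶜ).card + 1)) ≤ Bᶜ.card * Bᶜ.card := by
  have ha : ∀ v ∈ B, (G.neighborFinset v ∩ B).card + 1 ≤ k := by
    intro v hv
    have h := hB v
    rwa [Finset.insert_inter_of_mem hv, Finset.card_insert_of_notMem (by simp)] at h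
  have hc : ∀ v ∈ Bᶜ, (G.neighborFinset v ∩ B).card ≤ k := by
    intro v hv
    have h := hB v
    rwa [Finset.insert_inter_of_notMem (Finset.mem_compl.mp hv)] at h
  have hd : ∀ v ∈ Bᶜ, (G.neighborFinset v ∩ Bᶜ).card + 1 ≤ Bᶜ.card := by
    intro v hv
    have hsub : insert v (G.neighborFinset v ∩ Bᶜ) ⊆ Bᶜ := by
      intro u hu
      rcases Finset.mem_insert.mp hu with h | h
      · subst h; exact hv
      · exact (Finset.mem_inter.mp h).2
    have h := Finset.card_le_card hsub
    rwa [Finset.card_insert_of_notMem (by simp)] at h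
  refine ⟨?_, ?_, ?_⟩
  · calc _ ≤ ∑ _v ∈ B, k := Finset.sum_le_sum ha
      _ = B.card * k := by rw [Finset.sum_const, smul_eq_mul]
  · calc _ ≤ ∑ _v ∈ Bᶜ, k := Finset.sum_le_sum hc
      _ = Bᶜ.card * k := by rw [Finset.sum_const, smul_eq_mul]
  · calc _ ≤ ∑ _v ∈ Bᶜ, Bᶜ.card := Finset.sum_le_sum hd
      _ = Bᶜ.card * Bᶜ.card := by rw [Finset.sum_const, smul_eq_mul]

private lemma packing_total {V : Type*} [Fintype V] [DecidableEq V]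
    (G : SimpleGraph V) [DecidableRel G.Adj] {k : ℕ} (B : Finset V)
    (hB : G.IsLimitedPacking k B) :
    2 * G.edgeFinset.card + Fintype.card V
      ≤ B.card * k + 2 * (Bᶜ.card * k) + Bᶜ.card * Bᶜ.card := by
  obtain ⟨h1, h2, h3⟩ := packing_count G B hB
  have hsplit := edge_split G B
  have hcards : B.card + Bᶜ.card = Fintype.card V := Finset.card_add_card_compl B
  have e1 : ∑ v ∈ B, ((G.neighborFinset v ∩ B).card + 1)
      = (∑ v ∈ B, (G.neighborFinset v ∩ B).card) + B.card := by
    rw [Finset.sum_add_distrib, Finset.sum_const, smul_eq_mul, mul_one]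
  have e3 : ∑ v ∈ Bᶜ, ((G.neighborFinset v ∩ Bᶜ).card + 1)
      = (∑ v ∈ Bᶜ, (G.neighborFinset v ∩ Bᶜ).card) + Bᶜ.card := by
    rw [Finset.sum_add_distrib, Finset.sum_const, smul_eq_mul, mul_one]
  rw [e1] at h1
  rw [e3] at h3
  omega

private lemma real_ub {V : Type*} [Fintype V] [DecidableEq V]
    (G : SimpleGraph V) [DecidableRel G.Adj] {k n m : ℕ}
    (hk1 : 1 ≤ k) (hn : n = Fintype.card V) (hm : m = G.edgeFinset.card)
    (B : Finset V) (hB : G.IsLimitedPacking k B) :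
    (B.card : ℝ) ≤ n + k / 2 - Real.sqrt ((k : ℝ) ^ 2 / 4 + (1 - (k : ℝ)) * n + 2 * m) := by
  have htot := packing_total G B hB
  rw [← hm, ← hn] at htot
  have hcards : B.card + Bᶜ.card = Fintype.card V := Finset.card_add_card_compl B
  have hcR : (B.card : ℝ) + (Bᶜ.card : ℝ) = (n : ℝ) := by
    rw [hn]; exact_mod_cast hcards
  have htotR : (2 * m + (n : ℝ))
      ≤ (B.card : ℝ) * k + 2 * ((Bᶜ.card : ℝ) * k) + (Bᶜ.card : ℝ) * Bᶜ.card := by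
    exact_mod_cast htot
  have hreal : (k : ℝ) ^ 2 / 4 + (1 - (k : ℝ)) * n + 2 * m ≤ ((Bᶜ.card : ℝ) + k / 2) ^ 2 := by
    nlinarith [htotR, hcR]
  have hs : Real.sqrt ((k : ℝ) ^ 2 / 4 + (1 - (k : ℝ)) * n + 2 * m)
      ≤ (Bᶜ.card : ℝ) + k / 2 := by
    calc Real.sqrt _ ≤ Real.sqrt (((Bᶜ.card : ℝ) + k / 2) ^ 2) := Real.sqrt_le_sqrt hreal
      _ = (Bᶜ.card : ℝ) + k / 2 := Real.sqrt_sq (by positivity)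
  linarith

/-- Characterization of equality in the upper bound
`L_k(G) ≤ n + k/2 - √(k²/4 + (1-k)n + 2m)`: equality holds iff there is a clique `S`
such that the induced subgraph on the complement of `S` is `(k-1)`-regular and every
vertex of `S` has exactly `k` neighbours outside `S`. -/
theorem limited_packing_upper_bound_eq_iff {V : Type*} [Fintype V] [DecidableEq V]
    (G : SimpleGraph V) [DecidableRel G.Adj] (k n m : ℕ)
    (hk1 : 1 ≤ k) (hk2 : k ≤ G.maxDegree)
    (hn : n = Fintype.card V) (hm : m = G.edgeFinset.card)
    (hcond : (k : ℝ) ≤ 2 * ((n : ℝ) - Real.sqrt ((n : ℝ) ^ 2 - n - 2 * m)) ∨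
      k - 1 ≤ G.minDegree) :
    (G.limitedPackingNumber k : ℝ) =
      n + k / 2 - Real.sqrt ((k : ℝ) ^ 2 / 4 + (1 - (k : ℝ)) * n + 2 * m) ↔
    ∃ S : Finset V, G.IsClique ↑S ∧
      (∀ v ∉ S, ((G.neighborFinset v) \ S).card = k - 1) ∧
      (∀ v ∈ S, ((G.neighborFinset v) \ S).card = k) := by
  have hPne : {i : ℕ | ∃ B : Finset V, G.IsLimitedPacking k B ∧ B.card = i}.Nonempty :=
    ⟨0, ∅, fun v => by simp, rfl⟩
  have hPbdd : BddAbove {i : ℕ | ∃ B : Finset V, G.IsLimitedPacking k B ∧ B.card = i} := by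
    refine ⟨Fintype.card V, ?_⟩
    rintro i ⟨B, -, rfl⟩
    exact Finset.card_le_univ B
  constructor
  · intro heq
    -- D ≥ 0
    have hD : (0 : ℝ) ≤ (k : ℝ) ^ 2 / 4 + (1 - (k : ℝ)) * n + 2 * m := by
      rcases hcond with hl | hr
      · have h1 : m ≤ (Fintype.card V).choose 2 := hm ▸ G.card_edgeFinset_le_card_choose_two
        have h2 : (m : ℝ) ≤ (n : ℝ) * ((n : ℝ) - 1) / 2 := by
          calc (m : ℝ) ≤ ((Fintype.card V).choose 2 : ℝ) := Nat.cast_le.mpr h1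
            _ = (n : ℝ) * ((n : ℝ) - 1) / 2 := by rw [hn, Nat.cast_choose_two]
        have hE : (0 : ℝ) ≤ (n : ℝ) ^ 2 - n - 2 * m := by nlinarith
        have hsq := Real.sq_sqrt hE
        have hs0 := Real.sqrt_nonneg ((n : ℝ) ^ 2 - (n : ℝ) - 2 * m)
        nlinarith [hsq, hs0, hl]
      · have hdeg : ∀ v : V, k - 1 ≤ G.degree v :=
          fun v => le_trans hr (G.minDegree_le_degree v)
        have hsum : Fintype.card V * (k - 1) ≤ ∑ v, G.degree v := by
          calc Fintype.card V * (k - 1) = ∑ _v : V, (k - 1) := by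
                rw [Finset.sum_const, smul_eq_mul, Finset.card_univ]
            _ ≤ _ := Finset.sum_le_sum fun v _ => hdeg v
        have h2 : n * (k - 1) ≤ 2 * m := by
          rw [hn, hm, ← G.sum_degrees_eq_twice_card_edges]; exact hsum
        have h2R : (n : ℝ) * ((k : ℝ) - 1) ≤ 2 * m := by
          have h3 := (Nat.cast_le (α := ℝ)).mpr h2
          push_cast [Nat.cast_sub hk1] at h3
          linarith
        nlinarith [sq_nonneg (k : ℝ)]
    obtain ⟨B, hB, hBcard⟩ :
        ∃ B : Finset V, G.IsLimitedPacking k B ∧ B.card = G.limitedPackingNumber k :=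
      Nat.sSup_mem hPne hPbdd
    have hcards : B.card + Bᶜ.card = Fintype.card V := Finset.card_add_card_compl B
    have hcR : (B.card : ℝ) + (Bᶜ.card : ℝ) = (n : ℝ) := by
      rw [hn]; exact_mod_cast hcards
    have hsqrt : Real.sqrt ((k : ℝ) ^ 2 / 4 + (1 - (k : ℝ)) * n + 2 * m)
        = (Bᶜ.card : ℝ) + k / 2 := by
      rw [← hBcard] at heq
      linarith [heq, hcR]
    have hDsq : (k : ℝ) ^ 2 / 4 + (1 - (k : ℝ)) * n + 2 * m
        = ((Bᶜ.card : ℝ) + k / 2) ^ 2 := by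
      rw [← hsqrt, Real.sq_sqrt hD]
    have hnatR : (2 * m + (n : ℝ))
        = (B.card : ℝ) * k + 2 * ((Bᶜ.card : ℝ) * k) + (Bᶜ.card : ℝ) * Bᶜ.card := by
      nlinarith [hDsq, hcR]
    have hnat : 2 * m + n = B.card * k + 2 * (Bᶜ.card * k) + Bᶜ.card * Bᶜ.card := by
      exact_mod_cast hnatR
    obtain ⟨h1, h2, h3⟩ := packing_count G B hB
    have hsplit := edge_split G B
    rw [← hm] at hsplit
    have e1 : ∑ v ∈ B, ((G.neighborFinset v ∩ B).card + 1)
        = (∑ v ∈ B, (G.neighborFinset v ∩ B).card) + B.card := by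
      rw [Finset.sum_add_distrib, Finset.sum_const, smul_eq_mul, mul_one]
    have e3 : ∑ v ∈ Bᶜ, ((G.neighborFinset v ∩ Bᶜ).card + 1)
        = (∑ v ∈ Bᶜ, (G.neighborFinset v ∩ Bᶜ).card) + Bᶜ.card := by
      rw [Finset.sum_add_distrib, Finset.sum_const, smul_eq_mul, mul_one]
    rw [e1] at h1
    rw [e3] at h3
    have hnV : n = B.card + Bᶜ.card := by rw [hn]; omega
    have ha_eq : (∑ v ∈ B, (G.neighborFinset v ∩ B).card) + B.card = B.card * k := by omega
    have hc_eq : ∑ v ∈ Bᶜ, (G.neighborFinset v ∩ B).card = Bᶜ.card * k := by omega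
    have hd_eq : (∑ v ∈ Bᶜ, (G.neighborFinset v ∩ Bᶜ).card) + Bᶜ.card
        = Bᶜ.card * Bᶜ.card := by omega
    have ha : ∀ v ∈ B, (G.neighborFinset v ∩ B).card + 1 = k := by
      refine sum_all_eq ?_ (le_of_eq (by rw [e1, ha_eq]))
      intro v hv
      have h := hB v
      rwa [Finset.insert_inter_of_mem hv, Finset.card_insert_of_notMem (by simp)] at h
    have hc : ∀ v ∈ Bᶜ, (G.neighborFinset v ∩ B).card = k := by
      refine sum_all_eq ?_ (le_of_eq hc_eq.symm)
      intro v hv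
      have h := hB v
      rwa [Finset.insert_inter_of_notMem (Finset.mem_compl.mp hv)] at h
    have hd : ∀ v ∈ Bᶜ, (G.neighborFinset v ∩ Bᶜ).card + 1 = Bᶜ.card := by
      refine sum_all_eq ?_ (le_of_eq (by rw [e3, hd_eq]))
      intro v hv
      have hsub : insert v (G.neighborFinset v ∩ Bᶜ) ⊆ Bᶜ := by
        intro u hu
        rcases Finset.mem_insert.mp hu with h | h
        · subst h; exact hv
        · exact (Finset.mem_inter.mp h).2
      have h := Finset.card_le_card hsub
      rwa [Finset.card_insert_of_notMem (by simp)] at h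
    refine ⟨Bᶜ, ?_, ?_, ?_⟩
    · -- clique
      rw [SimpleGraph.isClique_iff]
      intro u hu v hv huv
      have hu' : u ∈ Bᶜ := hu
      have hv'' : v ∈ Bᶜ := hv
      have heq1 : G.neighborFinset u ∩ Bᶜ = Bᶜ.erase u := by
        refine Finset.eq_of_subset_of_card_le ?_ ?_
        · intro w hw
          rcases Finset.mem_inter.mp hw with ⟨hw1, hw2⟩
          refine Finset.mem_erase.mpr ⟨?_, hw2⟩
          intro hwu; rw [hwu] at hw1
          exact G.notMem_neighborFinset_self u hw1
        · rw [Finset.card_erase_of_mem hu']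
          have := hd u hu'
          omega
      have hv' : v ∈ Bᶜ.erase u := Finset.mem_erase.mpr ⟨fun h => huv h.symm, hv''⟩
      rw [← heq1] at hv'
      exact (SimpleGraph.mem_neighborFinset G u v).mp (Finset.mem_inter.mp hv').1
    · intro v hv
      have hvB : v ∈ B := by
        by_contra h
        exact hv (Finset.mem_compl.mpr h)
      have hdiff : G.neighborFinset v \ Bᶜ = G.neighborFinset v ∩ B := by
        ext w; simp
      rw [hdiff]
      have := ha v hvB
      omega
    · intro v hv
      have hdiff : G.neighborFinset v \ Bᶜ = G.neighborFinset v ∩ B := by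
        ext w; simp
      rw [hdiff]
      exact hc v hv
  · rintro ⟨S, hSclique, hSout, hSin⟩
    have hcards : Sᶜ.card + S.card = Fintype.card V := by
      have := Finset.card_add_card_compl S
      omega
    have hclq : ∀ v ∈ S, (G.neighborFinset v ∩ S).card = S.card - 1 := by
      intro v hv
      have heq1 : G.neighborFinset v ∩ S = S.erase v := by
        refine Finset.Subset.antisymm ?_ ?_
        · intro w hw
          rcases Finset.mem_inter.mp hw with ⟨hw1, hw2⟩
          refine Finset.mem_erase.mpr ⟨?_, hw2⟩
          intro hwv; subst hwv
          exact G.notMem_neighborFinset_self w hw1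
        · intro w hw
          rcases Finset.mem_erase.mp hw with ⟨hwv, hwS⟩
          refine Finset.mem_inter.mpr ⟨?_, hwS⟩
          exact (SimpleGraph.mem_neighborFinset G v w).mpr
            (hSclique hv hwS (fun h => hwv h.symm))
      rw [heq1, Finset.card_erase_of_mem hv]
    have hinter : ∀ v : V, G.neighborFinset v ∩ Sᶜ = G.neighborFinset v \ S := by
      intro v; ext w; simp
    -- Sᶜ is a k-limited packing
    have hpack : G.IsLimitedPacking k Sᶜ := by
      intro v
      by_cases hv : v ∈ S
      · rw [Finset.insert_inter_of_notMem (by simp [hv]), hinter v, hSin v hv]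
      · rw [Finset.insert_inter_of_mem (Finset.mem_compl.mpr hv),
          Finset.card_insert_of_notMem (by simp), hinter v, hSout v hv]
        omega
    -- edge count identity
    have hsplit := edge_split G Sᶜ
    rw [compl_compl] at hsplit
    have ea : ∑ v ∈ Sᶜ, (G.neighborFinset v ∩ Sᶜ).card = Sᶜ.card * (k - 1) := by
      rw [Finset.sum_congr rfl (fun v hv => by
        rw [hinter v, hSout v (Finset.mem_compl.mp hv)]), Finset.sum_const, smul_eq_mul]
    have ec : ∑ v ∈ S, (G.neighborFinset v ∩ Sᶜ).card = S.card * k := by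
      rw [Finset.sum_congr rfl (fun v hv => by rw [hinter v, hSin v hv]),
        Finset.sum_const, smul_eq_mul]
    have ed : ∑ v ∈ S, (G.neighborFinset v ∩ S).card = S.card * (S.card - 1) := by
      rw [Finset.sum_congr rfl (fun v hv => hclq v hv), Finset.sum_const, smul_eq_mul]
    have hcount : 2 * m = Sᶜ.card * (k - 1) + 2 * (S.card * k) + S.card * (S.card - 1) := by
      rw [hm, hsplit, ea, ec, ed]
    -- real identity
    have hcR : (Sᶜ.card : ℝ) + (S.card : ℝ) = (n : ℝ) := by
      rw [hn]; exact_mod_cast hcards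
    have hcountR : (2 * m : ℝ) = (Sᶜ.card : ℝ) * ((k : ℝ) - 1) + 2 * ((S.card : ℝ) * k)
        + (S.card : ℝ) * ((S.card : ℝ) - 1) := by
      rcases Nat.eq_zero_or_pos S.card with hx0 | hx1
      · have h2 : (2 * m : ℝ) = ((2 * m : ℕ) : ℝ) := by push_cast; ring
        rw [h2, hcount, hx0]
        push_cast [Nat.cast_sub hk1]
        ring
      · have h2 : (2 * m : ℝ) = ((2 * m : ℕ) : ℝ) := by push_cast; ring
        rw [h2, hcount]
        push_cast [Nat.cast_sub hk1, Nat.cast_sub hx1]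
        ring
    have hDsq : (k : ℝ) ^ 2 / 4 + (1 - (k : ℝ)) * n + 2 * m
        = ((S.card : ℝ) + k / 2) ^ 2 := by
      linear_combination hcountR + ((k : ℝ) - 1) * hcR
    have hsqrt : Real.sqrt ((k : ℝ) ^ 2 / 4 + (1 - (k : ℝ)) * n + 2 * m)
        = (S.card : ℝ) + k / 2 := by
      rw [hDsq, Real.sqrt_sq (by positivity)]
    have hmem : Sᶜ.card ∈ {i : ℕ | ∃ B : Finset V, G.IsLimitedPacking k B ∧ B.card = i} :=
      ⟨Sᶜ, hpack, rfl⟩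
    have hge : Sᶜ.card ≤ G.limitedPackingNumber k := le_csSup hPbdd hmem
    have hScR : ((Sᶜ.card : ℕ) : ℝ) = (n : ℝ) - S.card := by linarith
    have hle : G.limitedPackingNumber k ≤ Sᶜ.card := by
      refine csSup_le hPne ?_
      rintro i ⟨B, hB, rfl⟩
      have hub := real_ub G hk1 hn hm B hB
      rw [hsqrt] at hub
      have hfin : (B.card : ℝ) ≤ (Sᶜ.card : ℝ) := by
        rw [hScR]; linarith
      exact_mod_cast hfin
    have hL : G.limitedPackingNumber k = Sᶜ.card := le_antisymm hle hge
    rw [hL, hsqrt, hScR]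
    ring
end

section
/- Let G be a finite simple graph of order n and size m with no isolated vertex. Then ρₒ(G) ≤ n − √(2m − n). -/
open Finset

/-- A set `B` is an open packing in `G` if distinct vertices of `B`
have disjoint open neighbourhoods. -/
def SimpleGraph.IsOpenPacking {V : Type*} (G : SimpleGraph V) (B : Finset V) : Prop :=
  ∀ u ∈ B, ∀ v ∈ B, u ≠ v → G.neighborSet u ∩ G.neighborSet v = ∅

/-- The open packing number of `G`. -/
noncomputable def SimpleGraph.openPackingNumber {V : Type*} [Fintype V]
    (G : SimpleGraph V) : ℕ :=
  sSup {n : ℕ | ∃ B : Finset V, G.IsOpenPacking B ∧ B.card = n}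

/-- Upper bound on the open packing number in terms of order `n` and size `m` for graphs
with no isolated vertex. -/
theorem open_packing_upper_bound {V : Type*} [Fintype V] [DecidableEq V]
    (G : SimpleGraph V) [DecidableRel G.Adj] (n m : ℕ)
    (hn : n = Fintype.card V) (hm : m = G.edgeFinset.card)
    (hiso : ∀ v : V, 0 < G.degree v) :
    (G.openPackingNumber : ℝ) ≤ n - Real.sqrt (2 * m - n) := by
  have hbdd : BddAbove {k : ℕ | ∃ B : Finset V, G.IsOpenPacking B ∧ B.card = k} := by
    refine ⟨Fintype.card V, ?_⟩
    rintro k ⟨B, -, rfl⟩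
    exact B.card_le_univ
  have hne : {k : ℕ | ∃ B : Finset V, G.IsOpenPacking B ∧ B.card = k}.Nonempty :=
    ⟨0, ∅, by intro u hu; simp at hu, rfl⟩
  obtain ⟨B, hB, hcard0⟩ := Nat.sSup_mem hne hbdd
  set ρ := G.openPackingNumber with hρ
  have hcard : B.card = ρ := hcard0
  clear hcard0
  have hρn : ρ ≤ n := by
    rw [hn, ← hcard]; exact B.card_le_univ
  -- each vertex has at most one neighbor in B
  have hone : ∀ v : V, ((G.neighborFinset v) ∩ B).card ≤ 1 := by
    intro v
    apply Finset.card_le_one.2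
    intro a ha b hb
    by_contra hab
    have := hB a (Finset.mem_of_mem_inter_right ha) b (Finset.mem_of_mem_inter_right hb) hab
    have hv : v ∈ G.neighborSet a ∩ G.neighborSet b := by
      constructor
      · exact G.adj_symm ((G.mem_neighborFinset _ _).1 (Finset.mem_of_mem_inter_left ha))
      · exact G.adj_symm ((G.mem_neighborFinset _ _).1 (Finset.mem_of_mem_inter_left hb))
    rw [this] at hv
    exact hv
  -- sum of degrees over B is at most n
  have hsum1 : ∑ b ∈ B, G.degree b ≤ n := by
    have hdisj : ∀ u ∈ B, ∀ v ∈ B, u ≠ v →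
        Disjoint (G.neighborFinset u) (G.neighborFinset v) := by
      intro u hu v hv huv
      rw [Finset.disjoint_left]
      intro x hx hx'
      have := hB u hu v hv huv
      have hxmem : x ∈ G.neighborSet u ∩ G.neighborSet v :=
        ⟨(G.mem_neighborFinset _ _).1 hx, (G.mem_neighborFinset _ _).1 hx'⟩
      rw [this] at hxmem
      exact hxmem
    calc ∑ b ∈ B, G.degree b = (B.biUnion fun b => G.neighborFinset b).card :=
          (Finset.card_biUnion hdisj).symm
      _ ≤ Fintype.card V := Finset.card_le_univ _
      _ = n := hn.symm
  -- degrees outside B are at most n - ρ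
  have hsum2 : ∀ v ∉ B, G.degree v ≤ n - ρ := by
    intro v hv
    have hsplit : G.neighborFinset v ⊆ ((Finset.univ \ B).erase v) ∪ (G.neighborFinset v ∩ B) := by
      intro x hx
      by_cases hxB : x ∈ B
      · exact Finset.mem_union_right _ (Finset.mem_inter.2 ⟨hx, hxB⟩)
      · refine Finset.mem_union_left _ (Finset.mem_erase.2 ⟨?_, ?_⟩)
        · rintro rfl
          exact G.loopless.irrefl _ ((G.mem_neighborFinset _ _).1 hx)
        · exact Finset.mem_sdiff.2 ⟨Finset.mem_univ x, hxB⟩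
    have h1 : ((Finset.univ \ B).erase v).card = n - ρ - 1 := by
      rw [Finset.card_erase_of_mem (Finset.mem_sdiff.2 ⟨Finset.mem_univ v, hv⟩),
        Finset.card_sdiff_of_subset (Finset.subset_univ B), Finset.card_univ, ← hn, hcard]
    have hρlt : ρ < n := by
      rcases lt_or_eq_of_le hρn with h | h
      · exact h
      · exfalso
        have hBuniv : B = Finset.univ := Finset.eq_univ_of_card B (by rw [hcard, h, hn])
        exact hv (hBuniv ▸ Finset.mem_univ v)
    calc G.degree v = (G.neighborFinset v).card := rfl
      _ ≤ ((Finset.univ \ B).erase v).card + (G.neighborFinset v ∩ B).card :=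
          le_trans (Finset.card_le_card hsplit) (Finset.card_union_le _ _)
      _ ≤ (n - ρ - 1) + 1 := by rw [h1]; exact Nat.add_le_add_left (hone v) _
      _ = n - ρ := Nat.succ_pred_eq_of_pos (tsub_pos_of_lt hρlt)
  -- 2m ≤ n + (n-ρ)^2
  have hkey : 2 * m ≤ n + (n - ρ) * (n - ρ) := by
    have h2m : 2 * m = ∑ v : V, G.degree v := by
      rw [hm, ← SimpleGraph.sum_degrees_eq_twice_card_edges]
    have hsplit : ∑ v : V, G.degree v = ∑ b ∈ B, G.degree b + ∑ v ∈ Finset.univ \ B, G.degree v := by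
      rw [← Finset.sum_sdiff (Finset.subset_univ B)]; ring_nf
    have h2 : ∑ v ∈ Finset.univ \ B, G.degree v ≤ (n - ρ) * (n - ρ) := by
      calc ∑ v ∈ Finset.univ \ B, G.degree v ≤ ∑ _v ∈ Finset.univ \ B, (n - ρ) :=
            Finset.sum_le_sum fun v hv => hsum2 v (Finset.mem_sdiff.1 hv).2
        _ = (n - ρ) * (n - ρ) := by
            rw [Finset.sum_const, Finset.card_sdiff_of_subset (Finset.subset_univ B), Finset.card_univ,
              ← hn, hcard, smul_eq_mul]
    calc 2 * m = ∑ b ∈ B, G.degree b + ∑ v ∈ Finset.univ \ B, G.degree v := by rw [h2m, hsplit]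
      _ ≤ n + (n - ρ) * (n - ρ) := Nat.add_le_add hsum1 h2
  -- pass to the reals
  have hcast : ((n - ρ : ℕ) : ℝ) = (n : ℝ) - ρ := by
    rw [Nat.cast_sub hρn]
  have hsqrt : Real.sqrt (2 * m - n) ≤ (n : ℝ) - ρ := by
    have h1 : (2 * (m : ℝ) - n) ≤ ((n : ℝ) - ρ) ^ 2 := by
      have := hkey
      have hc : (2 * m : ℝ) ≤ (n : ℝ) + ((n - ρ : ℕ) : ℝ) * ((n - ρ : ℕ) : ℝ) := by
        exact_mod_cast this
      rw [hcast] at hc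
      nlinarith
    calc Real.sqrt (2 * m - n) ≤ Real.sqrt (((n : ℝ) - ρ) ^ 2) := Real.sqrt_le_sqrt h1
      _ = (n : ℝ) - ρ := by
          have hnρ : (ρ : ℝ) ≤ n := by exact_mod_cast hρn
          rw [Real.sqrt_sq (by linarith)]
  linarith
end

section
/- Let G be a finite connected simple graph of order n ≥ 2. Then ρₒ(G) = n/δ(G) if and only if there exists a set B ⊆ V(G) such that the subgraph of G induced on B is a disjoint union of copies of K₂ (i.e., it is 1-regular), every vertex of B has degree exactly δ(G) in G (so each vertex of B has exactly δ(G) − 1 neighbours in V(G) ∖ B), and every vertex of V(G) ∖ B has exactly one neighbour in B. -/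
open Finset

section Aux

variable {V : Type*} [Fintype V] [DecidableEq V] (G : SimpleGraph V) [DecidableRel G.Adj]

lemma op_finset_disjoint {B : Finset V} (hB : G.IsOpenPacking B)
    {u v : V} (hu : u ∈ B) (hv : v ∈ B) (huv : u ≠ v) :
    Disjoint (G.neighborFinset u) (G.neighborFinset v) := by
  rw [Finset.disjoint_left]
  intro a ha hav
  have h := hB u hu v hv huv
  have hmem : a ∈ G.neighborSet u ∩ G.neighborSet v := by
    constructor
    · simpa using ha
    · simpa using hav
  rw [h] at hmem
  exact hmem

lemma op_sum_degree_eq {B : Finset V} (hB : G.IsOpenPacking B) :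
    ∑ v ∈ B, G.degree v = (B.biUnion (fun v => G.neighborFinset v)).card := by
  rw [Finset.card_biUnion (fun u hu v hv huv => op_finset_disjoint G hB hu hv huv)]
  simp [SimpleGraph.card_neighborFinset_eq_degree]

lemma op_mul_le [Nonempty V] {B : Finset V} (hB : G.IsOpenPacking B) :
    G.minDegree * B.card ≤ Fintype.card V := by
  calc G.minDegree * B.card = ∑ _v ∈ B, G.minDegree := by
        rw [Finset.sum_const, smul_eq_mul, mul_comm]
    _ ≤ ∑ v ∈ B, G.degree v := Finset.sum_le_sum (fun v _ => G.minDegree_le_degree v)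
    _ = (B.biUnion (fun v => G.neighborFinset v)).card := op_sum_degree_eq G hB
    _ ≤ Fintype.card V := Finset.card_le_univ _

lemma openPacking_set_bddAbove :
    BddAbove {n : ℕ | ∃ B : Finset V, G.IsOpenPacking B ∧ B.card = n} := by
  refine ⟨Fintype.card V, ?_⟩
  rintro n ⟨B, _, rfl⟩
  exact Finset.card_le_univ B

lemma openPacking_set_nonempty :
    {n : ℕ | ∃ B : Finset V, G.IsOpenPacking B ∧ B.card = n}.Nonempty :=
  ⟨0, ∅, fun u hu => by simp at hu, by simp⟩

lemma openPackingNumber_mem :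
    ∃ B : Finset V, G.IsOpenPacking B ∧ B.card = G.openPackingNumber :=
  Nat.sSup_mem (openPacking_set_nonempty G) (openPacking_set_bddAbove G)

end Aux

/-- Characterization of connected graphs of order `n ≥ 2` with `ρₒ(G) = n / δ(G)`:
equality holds iff there is a set `B` of vertices such that the induced subgraph
on `B` is `1`-regular (a disjoint union of copies of `K₂`), every vertex of `B`
has degree exactly `δ(G)` in `G`, and every vertex outside `B` has exactly one
neighbour in `B`. -/
theorem open_packing_eq_card_div_minDegree_iff {V : Type*} [Fintype V] [DecidableEq V]
    (G : SimpleGraph V) [DecidableRel G.Adj]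
    (hconn : G.Connected) (hn : 2 ≤ Fintype.card V) :
    (G.openPackingNumber : ℝ) = (Fintype.card V : ℝ) / G.minDegree ↔
    ∃ B : Finset V,
      (∀ v ∈ B, ((G.neighborFinset v) ∩ B).card = 1) ∧
      (∀ v ∈ B, G.degree v = G.minDegree) ∧
      (∀ v ∉ B, ((G.neighborFinset v) ∩ B).card = 1) := by
  have hne : Nonempty V := Fintype.card_pos_iff.mp (by omega)
  -- minimum degree is positive
  have hd : 0 < G.minDegree := by
    obtain ⟨v, hv⟩ := G.exists_minimal_degree_vertex
    obtain ⟨u, hu⟩ := Fintype.exists_ne_of_one_lt_card (by omega) v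
    obtain ⟨w⟩ := hconn.preconnected v u
    cases w with
    | nil => exact absurd rfl hu.symm
    | cons h p =>
        rw [hv, ← SimpleGraph.card_neighborFinset_eq_degree]
        exact Finset.card_pos.mpr ⟨_, by simpa using h⟩
  have hdR : (G.minDegree : ℝ) ≠ 0 := by positivity
  constructor
  · -- forward direction
    intro h
    rw [eq_div_iff hdR] at h
    have hNat : G.openPackingNumber * G.minDegree = Fintype.card V := by exact_mod_cast h
    obtain ⟨B, hB, hcard⟩ := openPackingNumber_mem G
    have hmulB : G.minDegree * B.card = Fintype.card V := by rw [hcard, mul_comm]; exact hNat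
    -- equality throughout the chain
    have hsum_le : ∑ v ∈ B, G.degree v ≤ Fintype.card V := by
      rw [op_sum_degree_eq G hB]; exact Finset.card_le_univ _
    have hle : G.minDegree * B.card ≤ ∑ v ∈ B, G.degree v := by
      calc G.minDegree * B.card = ∑ _v ∈ B, G.minDegree := by
            rw [Finset.sum_const, smul_eq_mul, mul_comm]
        _ ≤ ∑ v ∈ B, G.degree v := Finset.sum_le_sum (fun v _ => G.minDegree_le_degree v)
    have hsum_eq : ∑ v ∈ B, G.degree v = Fintype.card V := le_antisymm hsum_le (hmulB ▸ hle)
    have hconst : (∑ _v ∈ B, G.minDegree) = ∑ v ∈ B, G.degree v := by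
      rw [Finset.sum_const, smul_eq_mul, mul_comm, hmulB, hsum_eq]
    have hdeg : ∀ v ∈ B, G.degree v = G.minDegree := by
      intro v hv
      exact ((Finset.sum_eq_sum_iff_of_le
        (fun i _ => G.minDegree_le_degree i)).mp hconst v hv).symm
    -- the neighbourhoods cover everything
    have hcover : B.biUnion (fun v => G.neighborFinset v) = Finset.univ := by
      apply Finset.eq_univ_of_card
      rw [← op_sum_degree_eq G hB, hsum_eq]
    have hone : ∀ w : V, ((G.neighborFinset w) ∩ B).card = 1 := by
      intro w
      have hw : w ∈ B.biUnion (fun v => G.neighborFinset v) := hcover ▸ Finset.mem_univ w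
      rw [Finset.mem_biUnion] at hw
      obtain ⟨v, hvB, hwv⟩ := hw
      rw [Finset.card_eq_one]
      refine ⟨v, ?_⟩
      ext x
      simp only [Finset.mem_inter, SimpleGraph.mem_neighborFinset, Finset.mem_singleton]
      constructor
      · rintro ⟨hadj, hxB⟩
        by_contra hxv
        have hdisj := op_finset_disjoint G hB hxB hvB hxv
        rw [Finset.disjoint_left] at hdisj
        exact hdisj (by simpa using hadj.symm) (by simpa using hwv)
      · rintro rfl
        rw [SimpleGraph.mem_neighborFinset] at hwv
        exact ⟨hwv.symm, hvB⟩
    exact ⟨B, fun v _ => hone v, hdeg, fun v _ => hone v⟩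
  · -- backward direction
    rintro ⟨B, h1, h2, h3⟩
    have hone : ∀ w : V, ((G.neighborFinset w) ∩ B).card = 1 := by
      intro w
      by_cases hw : w ∈ B
      · exact h1 w hw
      · exact h3 w hw
    -- B is an open packing
    have hB : G.IsOpenPacking B := by
      intro u hu v hv huv
      rw [Set.eq_empty_iff_forall_notMem]
      rintro w ⟨hwu, hwv⟩
      have huw : u ∈ G.neighborFinset w ∩ B := by
        simp only [Finset.mem_inter, SimpleGraph.mem_neighborFinset]
        exact ⟨(G.adj_symm hwu), hu⟩
      have hvw : v ∈ G.neighborFinset w ∩ B := by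
        simp only [Finset.mem_inter, SimpleGraph.mem_neighborFinset]
        exact ⟨(G.adj_symm hwv), hv⟩
      have := Finset.card_eq_one.mp (hone w)
      obtain ⟨a, ha⟩ := this
      rw [ha, Finset.mem_singleton] at huw hvw
      exact huv (huw.trans hvw.symm)
    -- neighbourhoods cover everything
    have hcover : B.biUnion (fun v => G.neighborFinset v) = Finset.univ := by
      apply Finset.eq_univ_of_forall
      intro w
      have := hone w
      have hpos : (0 : ℕ) < ((G.neighborFinset w) ∩ B).card := by omega
      obtain ⟨v, hv⟩ := Finset.card_pos.mp hpos
      rw [Finset.mem_inter, SimpleGraph.mem_neighborFinset] at hv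
      rw [Finset.mem_biUnion]
      exact ⟨v, hv.2, by simpa using hv.1.symm⟩
    have hmulB : G.minDegree * B.card = Fintype.card V := by
      have : ∑ v ∈ B, G.degree v = Fintype.card V := by
        rw [op_sum_degree_eq G hB, hcover, Finset.card_univ]
      calc G.minDegree * B.card = ∑ _v ∈ B, G.minDegree := by
            rw [Finset.sum_const, smul_eq_mul, mul_comm]
        _ = ∑ v ∈ B, G.degree v := Finset.sum_congr rfl (fun v hv => (h2 v hv).symm)
        _ = Fintype.card V := this
    -- the packing number equals B.card
    have hge : B.card ≤ G.openPackingNumber :=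
      le_csSup (openPacking_set_bddAbove G) ⟨B, hB, rfl⟩
    have hle : G.openPackingNumber ≤ B.card := by
      obtain ⟨C, hC, hCcard⟩ := openPackingNumber_mem G
      have := op_mul_le G hC
      rw [hCcard] at this
      rw [← hmulB] at this
      exact Nat.le_of_mul_le_mul_left this hd
    have heq : G.openPackingNumber = B.card := le_antisymm hle hge
    rw [eq_div_iff hdR]
    rw [heq]
    rw [← hmulB]
    push_cast
    ring
end

section
/- Let G be a finite simple graph of order n with δ(G) ≥ 2. Then γ×₂(G) + ρ(G) ≤ n − δ(G) + 2. -/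
open Finset

/-- A set `B` is a packing in `G` if distinct vertices of `B` have disjoint
closed neighbourhoods. -/
def SimpleGraph.IsPacking {V : Type*} [Fintype V] [DecidableEq V]
    (G : SimpleGraph V) [DecidableRel G.Adj] (B : Finset V) : Prop :=
  ∀ u ∈ B, ∀ v ∈ B, u ≠ v →
    (insert u (G.neighborFinset u)) ∩ (insert v (G.neighborFinset v)) = ∅

/-- The packing number of `G`. -/
noncomputable def SimpleGraph.packingNumber {V : Type*} [Fintype V] [DecidableEq V]
    (G : SimpleGraph V) [DecidableRel G.Adj] : ℕ :=
  sSup {n : ℕ | ∃ B : Finset V, G.IsPacking B ∧ B.card = n}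

/-- A set `D` is a double dominating set in `G` if every closed neighbourhood
contains at least two vertices of `D`. -/
def SimpleGraph.IsDoubleDominating {V : Type*} [Fintype V] [DecidableEq V]
    (G : SimpleGraph V) [DecidableRel G.Adj] (D : Finset V) : Prop :=
  ∀ v : V, 2 ≤ ((insert v (G.neighborFinset v)) ∩ D).card

/-- The double domination number of `G`. -/
noncomputable def SimpleGraph.doubleDominationNumber {V : Type*} [Fintype V] [DecidableEq V]
    (G : SimpleGraph V) [DecidableRel G.Adj] : ℕ :=
  sInf {n : ℕ | ∃ D : Finset V, G.IsDoubleDominating D ∧ D.card = n}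

/-- For every graph of order `n` with `δ(G) ≥ 2`, `γ×₂(G) + ρ(G) ≤ n - δ(G) + 2`. -/
theorem doubleDomination_add_packing_le {V : Type*} [Fintype V] [DecidableEq V]
    (G : SimpleGraph V) [DecidableRel G.Adj] (hδ : 2 ≤ G.minDegree) :
    G.doubleDominationNumber + G.packingNumber ≤ Fintype.card V - G.minDegree + 2 := by
  classical
  -- V is nonempty
  have hVne : Nonempty V := by
    by_contra h
    rw [not_nonempty_iff] at h
    have : G.minDegree = 0 := by
      simp [SimpleGraph.minDegree, Finset.univ_eq_empty]
    omega
  obtain ⟨v₀⟩ := hVne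
  set n := Fintype.card V with hn
  set δ := G.minDegree with hδdef
  -- the packing number is attained
  have hPne : {k : ℕ | ∃ B : Finset V, G.IsPacking B ∧ B.card = k}.Nonempty :=
    ⟨0, ∅, fun u hu => by simp at hu, rfl⟩
  have hPbdd : BddAbove {k : ℕ | ∃ B : Finset V, G.IsPacking B ∧ B.card = k} := by
    refine ⟨n, fun k hk => ?_⟩
    obtain ⟨B, _, hB⟩ := hk
    rw [← hB]
    exact card_le_card (subset_univ B)
  obtain ⟨B, hBpack, hBcard⟩ := Nat.sSup_mem hPne hPbdd
  rw [← SimpleGraph.packingNumber] at hBcard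
  have hρ1 : 1 ≤ G.packingNumber := by
    apply le_csSup hPbdd
    refine ⟨{v₀}, ?_, by simp⟩
    intro u hu v hv huv
    simp only [mem_singleton] at hu hv
    exact absurd (hu.trans hv.symm) huv
  -- pick a packing vertex b
  have hBne : B.Nonempty := by
    rw [← card_pos, hBcard]; omega
  obtain ⟨b, hb⟩ := hBne
  -- pick δ - 2 neighbours of b
  obtain ⟨A, hAsub, hAcard⟩ :=
    Finset.exists_subset_card_eq (s := G.neighborFinset b) (n := δ - 2)
      (by
        rw [SimpleGraph.card_neighborFinset_eq_degree]
        have := G.minDegree_le_degree b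
        omega)
  -- basic useful fact: a closed neighbourhood meets B in at most one vertex
  have hmem : ∀ x v : V, x ∈ insert v (G.neighborFinset v) ↔
      v ∈ insert x (G.neighborFinset x) := by
    intro x v
    simp only [mem_insert, SimpleGraph.mem_neighborFinset]
    constructor
    · rintro (h | h)
      · exact Or.inl h.symm
      · exact Or.inr h.symm
    · rintro (h | h)
      · exact Or.inl h.symm
      · exact Or.inr h.symm
  have hNB : ∀ v : V, ((insert v (G.neighborFinset v)) ∩ B).card ≤ 1 := by
    intro v
    by_contra h
    push_neg at h
    obtain ⟨b₁, hb₁, b₂, hb₂, hne⟩ := Finset.one_lt_card.mp h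
    rw [mem_inter] at hb₁ hb₂
    have h₁ : v ∈ insert b₁ (G.neighborFinset b₁) := (hmem b₁ v).mp hb₁.1
    have h₂ : v ∈ insert b₂ (G.neighborFinset b₂) := (hmem b₂ v).mp hb₂.1
    have := hBpack b₁ hb₁.2 b₂ hb₂.2 hne
    have : v ∈ (insert b₁ (G.neighborFinset b₁)) ∩ (insert b₂ (G.neighborFinset b₂)) :=
      mem_inter.mpr ⟨h₁, h₂⟩
    rw [‹_ ∩ _ = ∅›] at this
    simp at this
  -- B and A are disjoint
  have hdisj : Disjoint B A := by
    rw [Finset.disjoint_left]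
    intro x hxB hxA
    have hxb : G.Adj b x := (SimpleGraph.mem_neighborFinset G b x).mp (hAsub hxA)
    have hne : b ≠ x := G.ne_of_adj hxb
    have := hBpack b hb x hxB hne
    have hxmem : x ∈ (insert b (G.neighborFinset b)) ∩ (insert x (G.neighborFinset x)) := by
      rw [mem_inter]
      exact ⟨mem_insert_of_mem ((SimpleGraph.mem_neighborFinset G b x).mpr hxb),
        mem_insert_self x _⟩
    rw [this] at hxmem
    simp at hxmem
  -- the double dominating set
  set R : Finset V := B ∪ A with hR
  set D : Finset V := univ \ R with hD
  have hRcard : R.card = G.packingNumber + (δ - 2) := by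
    rw [hR, card_union_of_disjoint hdisj, hBcard, hAcard]
  have hDdom : G.IsDoubleDominating D := by
    intro v
    have hkey : (insert v (G.neighborFinset v)) ∩ D
        = (insert v (G.neighborFinset v)) \ R := by
      rw [hD]
      ext x
      simp [and_comm]
    rw [hkey]
    have hpart := Finset.card_sdiff_add_card_inter (insert v (G.neighborFinset v)) R
    have hNR : ((insert v (G.neighborFinset v)) ∩ R).card ≤ δ - 1 := by
      have hsplit : (insert v (G.neighborFinset v)) ∩ R
          = ((insert v (G.neighborFinset v)) ∩ B) ∪ ((insert v (G.neighborFinset v)) ∩ A) := by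
        rw [hR, inter_union_distrib_left]
      rw [hsplit]
      have h1 := hNB v
      have h2 : ((insert v (G.neighborFinset v)) ∩ A).card ≤ δ - 2 := by
        rw [← hAcard]
        exact card_le_card inter_subset_right
      have := card_union_le ((insert v (G.neighborFinset v)) ∩ B)
        ((insert v (G.neighborFinset v)) ∩ A)
      omega
    have hNcard : δ + 1 ≤ (insert v (G.neighborFinset v)).card := by
      rw [card_insert_of_notMem (by simp), SimpleGraph.card_neighborFinset_eq_degree]
      have := G.minDegree_le_degree v
      omega
    omega
  have hγ : G.doubleDominationNumber ≤ D.card :=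
    Nat.sInf_le ⟨D, hDdom, rfl⟩
  have hDcard : D.card = n - R.card := by
    rw [hD, card_sdiff_of_subset (subset_univ R), card_univ]
  have hRn : R.card ≤ n := (card_le_card (subset_univ R)).trans_eq card_univ
  omega
end

section
/- Let G be a finite simple graph of order n with δ(G) ≥ 2, and let B be a (δ(G) − 1)-limited packing in G of maximum cardinality. Then V(G) ∖ B is a double dominating set in G; consequently γ×₂(G) + L_{δ(G)−1}(G) ≤ n. -/
open Finset

/-- If `δ(G) ≥ 2` and `B` is a maximum `(δ(G)-1)`-limited packing in `G`, then the
complement of `B` is a double dominating set; consequently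
`γ×₂(G) + L_{δ(G)-1}(G) ≤ n`. -/
theorem compl_max_limited_packing_isDoubleDominating {V : Type*} [Fintype V] [DecidableEq V]
    (G : SimpleGraph V) [DecidableRel G.Adj] (hδ : 2 ≤ G.minDegree)
    (B : Finset V) (hB : G.IsLimitedPacking (G.minDegree - 1) B)
    (hmax : ∀ B' : Finset V, G.IsLimitedPacking (G.minDegree - 1) B' → B'.card ≤ B.card) :
    G.IsDoubleDominating Bᶜ ∧
    G.doubleDominationNumber + G.limitedPackingNumber (G.minDegree - 1) ≤ Fintype.card V := by

  have hdd : G.IsDoubleDominating Bᶜ := by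
    intro v
    have hB' := hB v
    set N := insert v (G.neighborFinset v) with hN
    have hsplit : (N ∩ Bᶜ).card + (N ∩ B).card = N.card := by
      have h : N ∩ Bᶜ = N \ B := by ext x; simp [Finset.mem_sdiff]
      rw [h]
      exact Finset.card_sdiff_add_card_inter N B
    have hcardN : G.minDegree + 1 ≤ N.card := by
      rw [hN, Finset.card_insert_of_notMem (by simp)]
      have := G.minDegree_le_degree v
      simp [SimpleGraph.card_neighborFinset_eq_degree]
      omega
    omega
  refine ⟨hdd, ?_⟩
  have h1 : G.doubleDominationNumber ≤ Bᶜ.card :=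
    Nat.sInf_le ⟨Bᶜ, hdd, rfl⟩
  have h2 : G.limitedPackingNumber (G.minDegree - 1) ≤ B.card := by
    refine csSup_le ⟨B.card, B, hB, rfl⟩ ?_
    rintro n ⟨B', hB', rfl⟩
    exact hmax B' hB'
  have h3 : Bᶜ.card = Fintype.card V - B.card := Finset.card_compl B
  have h4 : B.card ≤ Fintype.card V := Finset.card_le_univ B
  omega
end

section
/- Let G be a finite simple graph and let k be an integer with 1 ≤ k ≤ Δ(G). Then L_{k+1}(G) ≥ L_k(G) + 1. -/
open Finset

/-- If `1 ≤ k ≤ Δ(G)`, then `L_{k+1}(G) ≥ L_k(G) + 1`. -/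
theorem limitedPackingNumber_succ_ge {V : Type*} [Fintype V] [DecidableEq V]
    (G : SimpleGraph V) [DecidableRel G.Adj] (k : ℕ)
    (hk1 : 1 ≤ k) (hk2 : k ≤ G.maxDegree) :
    G.limitedPackingNumber k + 1 ≤ G.limitedPackingNumber (k + 1) := by
  classical
  have hV : Nonempty V := by
    by_contra h
    haveI : IsEmpty V := not_nonempty_iff.mp h
    have : G.maxDegree = 0 := by
      simp [SimpleGraph.maxDegree, Finset.univ_eq_empty]
    omega
  have hne : {n : ℕ | ∃ B : Finset V, G.IsLimitedPacking k B ∧ B.card = n}.Nonempty :=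
    ⟨0, ∅, fun v => by simp, rfl⟩
  have hbdd : BddAbove {n : ℕ | ∃ B : Finset V, G.IsLimitedPacking k B ∧ B.card = n} := by
    refine ⟨Fintype.card V, fun n hn => ?_⟩
    obtain ⟨B, _, rfl⟩ := hn
    exact Finset.card_le_univ B
  have hmem := Nat.sSup_mem hne hbdd
  obtain ⟨B, hB, hcard⟩ := hmem
  -- B ≠ univ
  have hBne : B ≠ Finset.univ := by
    intro hEq
    obtain ⟨w, hw⟩ := G.exists_maximal_degree_vertex
    have := hB w
    rw [hEq, Finset.inter_univ] at this
    have hwn : w ∉ G.neighborFinset w := by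
      simp [SimpleGraph.mem_neighborFinset]
    rw [Finset.card_insert_of_notMem hwn] at this
    rw [SimpleGraph.card_neighborFinset_eq_degree] at this
    omega
  have hss : B ⊂ Finset.univ := (Finset.subset_univ B).ssubset_of_ne hBne
  obtain ⟨v, _, hvB⟩ := Finset.exists_of_ssubset hss
  have hpack : G.IsLimitedPacking (k + 1) (insert v B) := by
    intro u
    have hsub : (insert u (G.neighborFinset u)) ∩ insert v B ⊆
        insert v ((insert u (G.neighborFinset u)) ∩ B) := by
      intro x hx
      simp only [Finset.mem_inter, Finset.mem_insert] at hx ⊢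
      tauto
    calc ((insert u (G.neighborFinset u)) ∩ insert v B).card
        ≤ (insert v ((insert u (G.neighborFinset u)) ∩ B)).card := Finset.card_le_card hsub
      _ ≤ ((insert u (G.neighborFinset u)) ∩ B).card + 1 := Finset.card_insert_le _ _
      _ ≤ k + 1 := by exact Nat.add_le_add_right (hB u) 1
  have hbdd' : BddAbove {n : ℕ | ∃ B : Finset V, G.IsLimitedPacking (k + 1) B ∧ B.card = n} := by
    refine ⟨Fintype.card V, fun n hn => ?_⟩
    obtain ⟨B, _, rfl⟩ := hn
    exact Finset.card_le_univ B
  have hle : (insert v B).card ≤ G.limitedPackingNumber (k + 1) :=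
    le_csSup hbdd' ⟨insert v B, hpack, rfl⟩
  rw [Finset.card_insert_of_notMem hvB, hcard] at hle
  exact hle
end

section
/- Let G be a finite simple graph with 2 ≤ δ(G) ≤ Δ(G) + 1. Then L_{δ(G)−1}(G) ≥ ρ(G) + δ(G) − 2. -/
open Finset

/-- If `2 ≤ δ(G) ≤ Δ(G) + 1`, then `L_{δ(G)-1}(G) ≥ ρ(G) + δ(G) - 2`. -/
theorem limitedPackingNumber_min_degree_sub_one_ge {V : Type*} [Fintype V] [DecidableEq V]
    (G : SimpleGraph V) [DecidableRel G.Adj]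
    (hδ2 : 2 ≤ G.minDegree) (hδΔ : G.minDegree ≤ G.maxDegree + 1) :
    G.packingNumber + G.minDegree - 2 ≤ G.limitedPackingNumber (G.minDegree - 1) := by
  classical
  set δ := G.minDegree with hδ
  have hne : Nonempty V := by
    by_contra h
    rw [not_nonempty_iff] at h
    have : δ = 0 := by
      simp [hδ, SimpleGraph.minDegree, Finset.univ_eq_empty]
    omega
  -- packing number is attained
  have hbdd : BddAbove {n : ℕ | ∃ B : Finset V, G.IsPacking B ∧ B.card = n} := by
    refine ⟨Fintype.card V, ?_⟩
    rintro n ⟨B, -, rfl⟩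
    exact (Finset.card_le_univ B).trans_eq Finset.card_univ
  have hne0 : {n : ℕ | ∃ B : Finset V, G.IsPacking B ∧ B.card = n}.Nonempty :=
    ⟨0, ∅, fun u hu => by simp at hu, rfl⟩
  obtain ⟨B, hB, hBcard⟩ := Nat.sSup_mem hne0 hbdd
  rw [show sSup {n : ℕ | ∃ B : Finset V, G.IsPacking B ∧ B.card = n} = G.packingNumber from rfl]
    at hBcard
  obtain ⟨v0⟩ := hne
  have hρ1 : 1 ≤ G.packingNumber := by
    refine le_csSup hbdd ⟨{v0}, ?_, Finset.card_singleton _⟩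
    intro u hu v hv huv
    simp only [Finset.mem_singleton] at hu hv
    exact absurd (hu.trans hv.symm) huv
  -- counting: |V| ≥ ρ * (δ + 1)
  have hcount : G.packingNumber * (δ + 1) ≤ Fintype.card V := by
    have hsum : (B.biUnion fun u => insert u (G.neighborFinset u)).card
        = ∑ u ∈ B, (insert u (G.neighborFinset u)).card :=
      Finset.card_biUnion (fun x hx y hy hxy =>
        Finset.disjoint_iff_inter_eq_empty.mpr (hB x hx y hy hxy))
    have hlow : B.card * (δ + 1) ≤ ∑ u ∈ B, (insert u (G.neighborFinset u)).card := by
      rw [← smul_eq_mul]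
      refine Finset.card_nsmul_le_sum _ _ _ ?_
      intro u hu
      rw [Finset.card_insert_of_notMem (G.notMem_neighborFinset_self u),
        G.card_neighborFinset_eq_degree]
      exact Nat.add_le_add_right (G.minDegree_le_degree u) 1
    calc G.packingNumber * (δ + 1) = B.card * (δ + 1) := by rw [hBcard]
      _ ≤ _ := hlow
      _ = _ := hsum.symm
      _ ≤ Fintype.card V := (Finset.card_le_univ _).trans_eq Finset.card_univ
  have hV : G.packingNumber + δ ≤ Fintype.card V := by
    have h1 : δ ≤ G.packingNumber * δ := Nat.le_mul_of_pos_left δ hρ1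
    have h2 : G.packingNumber * (δ + 1) = G.packingNumber * δ + G.packingNumber := by ring
    omega
  -- choose extra vertices
  have hcd : δ - 2 ≤ (Finset.univ \ B).card := by
    rw [Finset.card_sdiff_of_subset (Finset.subset_univ B), Finset.card_univ, hBcard]
    omega
  obtain ⟨A, hAsub, hAcard⟩ := Finset.exists_subset_card_eq hcd
  have hdisjAB : Disjoint A B := by
    refine Finset.disjoint_left.mpr fun a ha hb => ?_
    exact (Finset.mem_sdiff.mp (hAsub ha)).2 hb
  -- B ∪ A is a (δ-1)-limited packing
  have hLP : G.IsLimitedPacking (δ - 1) (B ∪ A) := by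
    intro w
    have hB1 : ((insert w (G.neighborFinset w)) ∩ B).card ≤ 1 := by
      refine Finset.card_le_one.mpr fun a ha b hb => ?_
      by_contra hab
      have h := hB a (Finset.mem_inter.mp ha).2 b (Finset.mem_inter.mp hb).2 hab
      have hwa : w ∈ insert a (G.neighborFinset a) := by
        have := (Finset.mem_inter.mp ha).1
        simp only [Finset.mem_insert, SimpleGraph.mem_neighborFinset] at this ⊢
        rcases this with h' | h'
        · exact Or.inl h'.symm
        · exact Or.inr h'.symm
      have hwb : w ∈ insert b (G.neighborFinset b) := by
        have := (Finset.mem_inter.mp hb).1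
        simp only [Finset.mem_insert, SimpleGraph.mem_neighborFinset] at this ⊢
        rcases this with h' | h'
        · exact Or.inl h'.symm
        · exact Or.inr h'.symm
      have : w ∈ (insert a (G.neighborFinset a)) ∩ (insert b (G.neighborFinset b)) :=
        Finset.mem_inter.mpr ⟨hwa, hwb⟩
      rw [h] at this
      exact absurd this (Finset.notMem_empty w)
    have hA1 : ((insert w (G.neighborFinset w)) ∩ A).card ≤ δ - 2 := by
      rw [← hAcard]
      exact Finset.card_le_card (Finset.inter_subset_right)
    calc ((insert w (G.neighborFinset w)) ∩ (B ∪ A)).card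
        = (((insert w (G.neighborFinset w)) ∩ B) ∪ ((insert w (G.neighborFinset w)) ∩ A)).card := by
          rw [Finset.inter_union_distrib_left]
      _ ≤ ((insert w (G.neighborFinset w)) ∩ B).card
            + ((insert w (G.neighborFinset w)) ∩ A).card := Finset.card_union_le _ _
      _ ≤ 1 + (δ - 2) := Nat.add_le_add hB1 hA1
      _ ≤ δ - 1 := by omega
  have hbdd2 : BddAbove {n : ℕ | ∃ B : Finset V, G.IsLimitedPacking (δ - 1) B ∧ B.card = n} := by
    refine ⟨Fintype.card V, ?_⟩
    rintro n ⟨B, -, rfl⟩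
    exact (Finset.card_le_univ B).trans_eq Finset.card_univ
  have hcardBA : (B ∪ A).card = G.packingNumber + (δ - 2) := by
    rw [Finset.card_union_of_disjoint hdisjAB.symm, hBcard, hAcard]
  have hfin : (B ∪ A).card ≤ G.limitedPackingNumber (δ - 1) :=
    le_csSup hbdd2 ⟨B ∪ A, hLP, rfl⟩
  omega
end

section
/- Let G be a finite simple graph, let k ≥ 1 be an integer, and let B be a k-limited packing in G of maximum cardinality. Then 2m ≤ (k − 1)|B| + 2k(n − |B|) + (n − |B|)(n − |B| − 1), where n is the order and m is the size of G. -/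
open Finset

lemma nbr_inter_eq_filter {V : Type*} [Fintype V] [DecidableEq V]
    (G : SimpleGraph V) [DecidableRel G.Adj] (v : V) (t : Finset V) :
    G.neighborFinset v ∩ t = t.filter (G.Adj v) := by
  ext w; simp [and_comm]

lemma sum_nbr_swap {V : Type*} [Fintype V] [DecidableEq V]
    (G : SimpleGraph V) [DecidableRel G.Adj] (s t : Finset V) :
    ∑ v ∈ s, (G.neighborFinset v ∩ t).card = ∑ w ∈ t, (G.neighborFinset w ∩ s).card := by
  simp_rw [nbr_inter_eq_filter, Finset.card_filter]
  rw [Finset.sum_comm]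
  simp_rw [G.adj_comm]

/-- Edge-count inequality for a maximum `k`-limited packing `B`:
`2m ≤ (k-1)|B| + 2k(n-|B|) + (n-|B|)(n-|B|-1)`. -/
theorem max_limited_packing_edge_bound {V : Type*} [Fintype V] [DecidableEq V]
    (G : SimpleGraph V) [DecidableRel G.Adj] (k n m : ℕ) (hk : 1 ≤ k)
    (hn : n = Fintype.card V) (hm : m = G.edgeFinset.card)
    (B : Finset V) (hB : G.IsLimitedPacking k B)
    (hmax : ∀ B' : Finset V, G.IsLimitedPacking k B' → B'.card ≤ B.card) :
    (2 * m : ℤ) ≤ ((k : ℤ) - 1) * B.card + 2 * k * ((n : ℤ) - B.card) +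
      ((n : ℤ) - B.card) * ((n : ℤ) - B.card - 1) := by
  classical
  set Bc : Finset V := Bᶜ with hBc
  have hcard : B.card + Bc.card = n := by
    rw [hn, hBc]
    simpa [Finset.card_compl] using Nat.add_sub_cancel' (Finset.card_le_univ B)
  have h1 : ∀ v ∈ B, (G.neighborFinset v ∩ B).card + 1 ≤ k := by
    intro v hv
    have := hB v
    have hsub : insert v (G.neighborFinset v ∩ B) ⊆ insert v (G.neighborFinset v) ∩ B := by
      intro w hw
      rcases Finset.mem_insert.mp hw with h | h
      · subst h; simp [hv]
      · simp only [Finset.mem_inter, Finset.mem_insert] at h ⊢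
        exact ⟨Or.inr h.1, h.2⟩
    have hvnot : v ∉ G.neighborFinset v ∩ B := by
      simp [SimpleGraph.irrefl]
    calc (G.neighborFinset v ∩ B).card + 1
        = (insert v (G.neighborFinset v ∩ B)).card := (Finset.card_insert_of_notMem hvnot).symm
      _ ≤ (insert v (G.neighborFinset v) ∩ B).card := Finset.card_le_card hsub
      _ ≤ k := this
  have h2 : ∀ v : V, (G.neighborFinset v ∩ B).card ≤ k := by
    intro v
    refine le_trans (Finset.card_le_card ?_) (hB v)
    exact Finset.inter_subset_inter (Finset.subset_insert _ _) le_rfl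
  have h3 : ∀ v ∈ Bc, (G.neighborFinset v ∩ Bc).card ≤ Bc.card - 1 := by
    intro v hv
    have hsub : G.neighborFinset v ∩ Bc ⊆ Bc.erase v := by
      intro w hw
      simp only [Finset.mem_inter, SimpleGraph.mem_neighborFinset] at hw
      exact Finset.mem_erase.mpr ⟨(G.ne_of_adj hw.1).symm, hw.2⟩
    calc (G.neighborFinset v ∩ Bc).card ≤ (Bc.erase v).card := Finset.card_le_card hsub
      _ = Bc.card - 1 := Finset.card_erase_of_mem hv
  have hhs : ∑ v : V, G.degree v = 2 * m := by
    rw [hm]; exact G.sum_degrees_eq_twice_card_edges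
  have hdeg : ∀ v : V, G.degree v =
      (G.neighborFinset v ∩ B).card + (G.neighborFinset v ∩ Bc).card := by
    intro v
    rw [SimpleGraph.degree, ← Finset.card_union_of_disjoint, ← Finset.inter_union_distrib_left]
    · simp [hBc]
    · exact Finset.disjoint_left.mpr (by
        intro w hw1 hw2
        simp only [Finset.mem_inter, hBc, Finset.mem_compl] at hw1 hw2
        exact hw2.2 hw1.2)
  have hsplit : (Finset.univ : Finset V) = B ∪ Bc := by
    simp [hBc]
  have hdisj : Disjoint B Bc := by
    rw [hBc]; exact disjoint_compl_right
  have key : 2 * m ≤ (k - 1) * B.card + 2 * k * Bc.card + Bc.card * (Bc.card - 1) := by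
    rw [← hhs]
    have hsum : ∑ v : V, G.degree v =
        (∑ v ∈ B, (G.neighborFinset v ∩ B).card + ∑ v ∈ B, (G.neighborFinset v ∩ Bc).card) +
        (∑ v ∈ Bc, (G.neighborFinset v ∩ B).card + ∑ v ∈ Bc, (G.neighborFinset v ∩ Bc).card) := by
      rw [hsplit, Finset.sum_union hdisj]
      simp_rw [hdeg, Finset.sum_add_distrib]
    rw [hsum, sum_nbr_swap G B Bc]
    have e1 : ∑ v ∈ B, (G.neighborFinset v ∩ B).card ≤ (k - 1) * B.card := by
      calc ∑ v ∈ B, (G.neighborFinset v ∩ B).card ≤ ∑ _v ∈ B, (k - 1) :=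
            Finset.sum_le_sum (fun v hv => by have := h1 v hv; omega)
        _ = (k - 1) * B.card := by rw [Finset.sum_const, smul_eq_mul, Nat.mul_comm]
    have e2 : ∑ v ∈ Bc, (G.neighborFinset v ∩ B).card ≤ k * Bc.card := by
      calc ∑ v ∈ Bc, (G.neighborFinset v ∩ B).card ≤ ∑ _v ∈ Bc, k :=
            Finset.sum_le_sum (fun v _ => h2 v)
        _ = k * Bc.card := by rw [Finset.sum_const, smul_eq_mul, Nat.mul_comm]
    have e3 : ∑ v ∈ Bc, (G.neighborFinset v ∩ Bc).card ≤ Bc.card * (Bc.card - 1) := by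
      calc ∑ v ∈ Bc, (G.neighborFinset v ∩ Bc).card ≤ ∑ _v ∈ Bc, (Bc.card - 1) :=
            Finset.sum_le_sum h3
        _ = Bc.card * (Bc.card - 1) := by rw [Finset.sum_const, smul_eq_mul, Nat.mul_comm]
    have hrearr : (k - 1) * B.card + 2 * k * Bc.card + Bc.card * (Bc.card - 1)
        = ((k - 1) * B.card + k * Bc.card) + (k * Bc.card + Bc.card * (Bc.card - 1)) := by
      generalize (k - 1) = k1
      generalize (Bc.card - 1) = c1
      ring
    rw [hrearr]
    exact add_le_add (add_le_add e1 e2) (add_le_add e2 e3)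
  -- convert to integers
  have hc : ((n : ℤ) - B.card) = (Bc.card : ℤ) := by
    have : (B.card : ℤ) + Bc.card = n := by exact_mod_cast hcard
    omega
  rw [hc]
  have hkc : ((k : ℤ) - 1) = ((k - 1 : ℕ) : ℤ) := by omega
  rw [hkc]
  have hcc : ((Bc.card * (Bc.card - 1) : ℕ) : ℤ) = (Bc.card : ℤ) * ((Bc.card : ℤ) - 1) := by
    rcases Nat.eq_zero_or_pos Bc.card with h0 | hpos
    · simp [h0]
    · push_cast [Nat.cast_sub hpos]; ring
  calc (2 * m : ℤ) ≤ (((k - 1) * B.card + 2 * k * Bc.card + Bc.card * (Bc.card - 1) : ℕ) : ℤ) := by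
        exact_mod_cast key
    _ = ((k - 1 : ℕ) : ℤ) * B.card + 2 * k * Bc.card + (Bc.card : ℤ) * ((Bc.card : ℤ) - 1) := by
        push_cast [hcc]
        ring
end

section
/- Let G be a finite connected simple graph of order n ≥ 2 and let B be an open packing in G. Then (δ(G) − 1)|B| ≤ |[B, V(G) ∖ B]| ≤ n − |B|, where |[B, V(G) ∖ B]| denotes the number of edges of G with one endpoint in B and the other in V(G) ∖ B. -/
open Finset

/-- The set of edges of `G` with one endpoint in `B` and the other in `V(G) \ B`. -/
noncomputable def SimpleGraph.crossEdges {V : Type*} [Fintype V] [DecidableEq V]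
    (G : SimpleGraph V) [DecidableRel G.Adj] (B : Finset V) : Finset (Sym2 V) :=
  G.edgeFinset.filter (fun e => ∃ u ∈ B, ∃ v ∉ B, e = s(u, v))

/-- If `G` is connected of order `n ≥ 2` and `B` is an open packing in `G`, then
`(δ(G) - 1)|B| ≤ |[B, V(G) \ B]| ≤ n - |B|`. -/
theorem open_packing_cross_edge_bounds {V : Type*} [Fintype V] [DecidableEq V]
    (G : SimpleGraph V) [DecidableRel G.Adj]
    (hconn : G.Connected) (hn : 2 ≤ Fintype.card V)
    (B : Finset V) (hB : G.IsOpenPacking B) :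
    (G.minDegree - 1) * B.card ≤ (G.crossEdges B).card ∧
    (G.crossEdges B).card ≤ Fintype.card V - B.card := by
  classical
  -- every vertex has at most one neighbour in B
  have hone : ∀ w : V, ((G.neighborFinset w) ∩ B).card ≤ 1 := by
    intro w
    rw [Finset.card_le_one]
    intro a ha b hb
    by_contra hab
    simp only [Finset.mem_inter, SimpleGraph.mem_neighborFinset] at ha hb
    have hdisj := hB a ha.2 b hb.2 hab
    have hw : w ∈ G.neighborSet a ∩ G.neighborSet b := ⟨ha.1.symm, hb.1.symm⟩
    rw [hdisj] at hw
    exact hw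
  constructor
  · -- lower bound
    have hsub : B.biUnion (fun v => (G.neighborFinset v \ B).image (fun w => s(v, w)))
        ⊆ G.crossEdges B := by
      intro e he
      simp only [Finset.mem_biUnion, Finset.mem_image, Finset.mem_sdiff,
        SimpleGraph.mem_neighborFinset] at he
      obtain ⟨v, hv, w, ⟨hadj, hw⟩, rfl⟩ := he
      simp only [SimpleGraph.crossEdges, Finset.mem_filter, SimpleGraph.mem_edgeFinset,
        SimpleGraph.mem_edgeSet]
      exact ⟨hadj, v, hv, w, hw, rfl⟩
    have hdisjoint : ∀ v ∈ B, ∀ u ∈ B, v ≠ u →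
        Disjoint ((G.neighborFinset v \ B).image (fun w => s(v, w)))
          ((G.neighborFinset u \ B).image (fun w => s(u, w))) := by
      intro v hv u hu hvu
      rw [Finset.disjoint_left]
      intro e he1 he2
      simp only [Finset.mem_image, Finset.mem_sdiff, SimpleGraph.mem_neighborFinset] at he1 he2
      obtain ⟨w, ⟨_, hw⟩, rfl⟩ := he1
      obtain ⟨w', ⟨_, hw'⟩, heq⟩ := he2
      rw [Sym2.eq_iff] at heq
      rcases heq with ⟨h1, h2⟩ | ⟨h1, h2⟩
      · exact hvu (h1.symm)
      · exact hw (h1 ▸ hu)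
    have hcard : (B.biUnion (fun v => (G.neighborFinset v \ B).image (fun w => s(v, w)))).card
        = ∑ v ∈ B, (G.neighborFinset v \ B).card := by
      rw [Finset.card_biUnion hdisjoint]
      refine Finset.sum_congr rfl fun v hv => ?_
      exact Finset.card_image_of_injective _ fun w w' h => Sym2.congr_right.mp h
    have hlow : ∀ v ∈ B, G.minDegree - 1 ≤ (G.neighborFinset v \ B).card := by
      intro v hv
      rw [Nat.sub_le_iff_le_add]
      calc G.minDegree ≤ G.degree v := G.minDegree_le_degree v
        _ = ((G.neighborFinset v) ∩ B).card + ((G.neighborFinset v) \ B).card := by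
            rw [Finset.card_inter_add_card_sdiff]; rfl
        _ ≤ (G.neighborFinset v \ B).card + 1 := by
            have := hone v; omega
    calc (G.minDegree - 1) * B.card = ∑ _v ∈ B, (G.minDegree - 1) := by
          rw [Finset.sum_const, smul_eq_mul, mul_comm]
      _ ≤ ∑ v ∈ B, (G.neighborFinset v \ B).card := Finset.sum_le_sum hlow
      _ = _ := hcard.symm
      _ ≤ (G.crossEdges B).card := Finset.card_le_card hsub
  · -- upper bound
    have hsub : G.crossEdges B ⊆
        Bᶜ.biUnion (fun w => ((G.neighborFinset w) ∩ B).image (fun v => s(v, w))) := by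
      intro e he
      simp only [SimpleGraph.crossEdges, Finset.mem_filter, SimpleGraph.mem_edgeFinset,
        SimpleGraph.mem_edgeSet] at he
      obtain ⟨hadj, u, hu, w, hw, rfl⟩ := he
      simp only [Finset.mem_biUnion, Finset.mem_image, Finset.mem_inter,
        SimpleGraph.mem_neighborFinset, Finset.mem_compl]
      exact ⟨w, hw, u, ⟨hadj.symm, hu⟩, rfl⟩
    calc (G.crossEdges B).card
        ≤ (Bᶜ.biUnion (fun w => ((G.neighborFinset w) ∩ B).image (fun v => s(v, w)))).card :=
          Finset.card_le_card hsub
      _ ≤ ∑ w ∈ Bᶜ, (((G.neighborFinset w) ∩ B).image (fun v => s(v, w))).card :=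
          Finset.card_biUnion_le
      _ ≤ ∑ _w ∈ Bᶜ, 1 :=
          Finset.sum_le_sum fun w _ => le_trans (Finset.card_image_le) (hone w)
      _ = Bᶜ.card := by simp
      _ = Fintype.card V - B.card := Finset.card_compl B
end
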